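/- arXiv:1010.4071 — 4 statements merged into one kernel-verified Lean document; each statement's English description precedes it below -/
import Mathlib

section
/- Let V be a finite-dimensional real vector space. There exists a unique group homomorphism I : PolF(V) → ℤ such that I(1_C) = (−1)^{dim C} for every polyhedral cell C in V, where 1_C is the indicator function of C and dim C is the dimension of C. (Equivalently, I carries each costandard indicator function j_C = (−1)^{dim C}·1_C to 1; I is the integral against Euler-characteristic measure.) -/
/-- A polyhedral cell in a real vector space: a nonempty subset cut out by finitely many
affine-linear equalities and finitely many strict affine-linear inequalities. -/
def IsPolyhedralCell {W : Type*} [AddCommGroup W] [Module ℝ W] (C : Set W) : Prop :=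
  C.Nonempty ∧
    ∃ (p q : ℕ) (f : Fin p → (W →ᵃ[ℝ] ℝ)) (g : Fin q → (W →ᵃ[ℝ] ℝ)),
      C = {x | (∀ i, f i x = 0) ∧ ∀ j, 0 < g j x}

/-- The dimension of a subset of a real vector space: the dimension of its affine span. -/
noncomputable def cellDim {W : Type*} [AddCommGroup W] [Module ℝ W] (C : Set W) : ℕ :=
  Module.finrank ℝ (affineSpan ℝ C).direction

open Classical in
/-- The (integer-valued) indicator function of a set. -/
noncomputable def ind {W : Type*} (C : Set W) : W → ℤ := fun x => if x ∈ C then 1 else 0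

/-- The group of polyhedral functions on `W`: the subgroup of the additive group of
functions `W → ℤ` generated by indicator functions of polyhedral cells. -/
def PolF (W : Type*) [AddCommGroup W] [Module ℝ W] : AddSubgroup (W → ℤ) :=
  AddSubgroup.closure {f | ∃ C : Set W, IsPolyhedralCell C ∧ f = ind C}

theorem ind_mem_PolF {W : Type*} [AddCommGroup W] [Module ℝ W] {C : Set W}
    (hC : IsPolyhedralCell C) : ind C ∈ PolF W :=
  AddSubgroup.subset_closure ⟨C, hC, rfl⟩

/-- `I : PolF W →+ ℤ` is integration against Euler-characteristic measure if it sends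
the indicator function of every polyhedral cell `C` to `(-1) ^ dim C`. -/
def IsEulerHom {W : Type*} [AddCommGroup W] [Module ℝ W] (I : PolF W →+ ℤ) : Prop :=
  ∀ (C : Set W) (hC : IsPolyhedralCell C),
    I ⟨ind C, ind_mem_PolF hC⟩ = (-1) ^ cellDim C

open Filter Topology Set

noncomputable def leftL (f : ℝ → ℤ) (x : ℝ) : ℤ := limUnder (𝓝[<] x) f
noncomputable def topL (f : ℝ → ℤ) : ℤ := limUnder atTop f
noncomputable def jmp (f : ℝ → ℤ) (x : ℝ) : ℤ := f x - leftL f x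

def D1 (f : ℝ → ℤ) : Prop :=
  (∀ x : ℝ, ∃ c : ℤ, ∀ᶠ t in 𝓝[<] x, f t = c) ∧
  (∃ c : ℤ, ∀ᶠ t in atTop, f t = c) ∧
  (Function.support (jmp f)).Finite

noncomputable def I1 (f : ℝ → ℤ) : ℤ := (∑ᶠ x, jmp f x) - topL f

lemma limUnder_eq_of_eventually {l : Filter ℝ} [l.NeBot] {f : ℝ → ℤ} {c : ℤ}
    (h : ∀ᶠ t in l, f t = c) : limUnder l f = c := by
  apply Filter.Tendsto.limUnder_eq
  exact Filter.Tendsto.congr' (EventuallyEq.symm h) tendsto_const_nhds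

lemma leftL_eq {f : ℝ → ℤ} {x : ℝ} {c : ℤ} (h : ∀ᶠ t in 𝓝[<] x, f t = c) :
    leftL f x = c := limUnder_eq_of_eventually h

lemma topL_eq {f : ℝ → ℤ} {c : ℤ} (h : ∀ᶠ t in atTop, f t = c) :
    topL f = c := limUnder_eq_of_eventually h

lemma D1.leftL_add {f g : ℝ → ℤ} (hf : D1 f) (hg : D1 g) (x : ℝ) :
    leftL (f + g) x = leftL f x + leftL g x := by
  obtain ⟨c, hc⟩ := hf.1 x
  obtain ⟨d, hd⟩ := hg.1 x
  rw [leftL_eq hc, leftL_eq hd, leftL_eq (f := f + g) (c := c + d)]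
  filter_upwards [hc, hd] with t h1 h2
  simp [h1, h2]

lemma D1.jmp_add {f g : ℝ → ℤ} (hf : D1 f) (hg : D1 g) (x : ℝ) :
    jmp (f + g) x = jmp f x + jmp g x := by
  simp only [jmp, hf.leftL_add hg, Pi.add_apply]; ring

lemma D1.add {f g : ℝ → ℤ} (hf : D1 f) (hg : D1 g) : D1 (f + g) := by
  refine ⟨fun x => ?_, ?_, ?_⟩
  · obtain ⟨c, hc⟩ := hf.1 x
    obtain ⟨d, hd⟩ := hg.1 x
    exact ⟨c + d, by filter_upwards [hc, hd] with t h1 h2; simp [h1, h2]⟩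
  · obtain ⟨c, hc⟩ := hf.2.1
    obtain ⟨d, hd⟩ := hg.2.1
    exact ⟨c + d, by filter_upwards [hc, hd] with t h1 h2; simp [h1, h2]⟩
  · apply Set.Finite.subset (hf.2.2.union hg.2.2)
    intro x hx
    simp only [Function.mem_support, hf.jmp_add hg] at hx
    by_contra h
    simp only [Set.mem_union, Function.mem_support, not_or, not_not] at h
    rw [h.1, h.2] at hx; simp at hx

lemma D1.I1_add {f g : ℝ → ℤ} (hf : D1 f) (hg : D1 g) :
    I1 (f + g) = I1 f + I1 g := by
  obtain ⟨c, hc⟩ := hf.2.1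
  obtain ⟨d, hd⟩ := hg.2.1
  have ht : topL (f + g) = topL f + topL g := by
    rw [topL_eq hc, topL_eq hd, topL_eq (f := f + g) (c := c + d)]
    filter_upwards [hc, hd] with t h1 h2; simp [h1, h2]
  have hs : (∑ᶠ x, jmp (f + g) x) = (∑ᶠ x, jmp f x) + ∑ᶠ x, jmp g x := by
    rw [← finsum_add_distrib hf.2.2 hg.2.2]
    exact finsum_congr (hf.jmp_add hg)
  simp only [I1, ht, hs]; ring

lemma D1.neg {f : ℝ → ℤ} (hf : D1 f) : D1 (-f) := by
  refine ⟨fun x => ?_, ?_, ?_⟩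
  · obtain ⟨c, hc⟩ := hf.1 x
    exact ⟨-c, by filter_upwards [hc] with t h1; simp [h1]⟩
  · obtain ⟨c, hc⟩ := hf.2.1
    exact ⟨-c, by filter_upwards [hc] with t h1; simp [h1]⟩
  · apply Set.Finite.subset hf.2.2
    intro x hx
    simp only [Function.mem_support] at hx ⊢
    intro h
    have : leftL (-f) x = - leftL f x := by
      obtain ⟨c, hc⟩ := hf.1 x
      rw [leftL_eq hc, leftL_eq (f := -f) (c := -c)]
      filter_upwards [hc] with t h1; simp [h1]
    simp only [jmp, this, Pi.neg_apply] at hx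
    simp only [jmp] at h
    omega

lemma D1.I1_neg {f : ℝ → ℤ} (hf : D1 f) : I1 (-f) = - I1 f := by
  obtain ⟨c, hc⟩ := hf.2.1
  have ht : topL (-f) = - topL f := by
    rw [topL_eq hc, topL_eq (f := -f) (c := -c)]
    filter_upwards [hc] with t h1; simp [h1]
  have hj : ∀ x, jmp (-f) x = - jmp f x := by
    intro x
    obtain ⟨cx, hcx⟩ := hf.1 x
    simp only [jmp, leftL_eq hcx, Pi.neg_apply,
      leftL_eq (f := -f) (c := -cx) (by filter_upwards [hcx] with t h1; simp [h1])]
    ring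
  have hs : (∑ᶠ x, jmp (-f) x) = - ∑ᶠ x, jmp f x := by
    rw [finsum_congr hj, finsum_neg_distrib]
  simp only [I1, ht, hs]; ring

lemma D1.zero : D1 (0 : ℝ → ℤ) :=
  ⟨fun _ => ⟨0, Filter.Eventually.of_forall fun _ => rfl⟩,
   ⟨0, Filter.Eventually.of_forall fun _ => rfl⟩,
   by
    have : ∀ x, jmp (0 : ℝ → ℤ) x = 0 := fun x => by
      rw [jmp, leftL_eq (f := 0) (c := 0) (Filter.Eventually.of_forall fun _ => rfl)]
      simp
    simp [Function.support, this]⟩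

lemma jmp_zero (x : ℝ) : jmp (0 : ℝ → ℤ) x = 0 := by
  rw [jmp, leftL_eq (f := 0) (c := 0) (Filter.Eventually.of_forall fun _ => rfl)]
  simp

lemma I1_zero : I1 (0 : ℝ → ℤ) = 0 := by
  rw [I1, topL_eq (f := 0) (c := 0) (Filter.Eventually.of_forall fun _ => rfl),
    finsum_congr jmp_zero]
  simp

lemma ind_of_mem {W : Type*} {C : Set W} {x : W} (h : x ∈ C) : ind C x = 1 := by
  simp [ind, h]

lemma ind_of_not_mem {W : Type*} {C : Set W} {x : W} (h : x ∉ C) : ind C x = 0 := by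
  simp [ind, h]

lemma ind_empty {W : Type*} : ind (∅ : Set W) = 0 := by
  funext x; simp [ind]

lemma evLt_ne (x a : ℝ) : ∀ᶠ t in 𝓝[<] x, t ≠ a := by
  rcases lt_or_ge a x with h | h
  · filter_upwards [Ioo_mem_nhdsLT_of_mem (Set.mem_Ioc.2 ⟨h, le_refl x⟩)] with t ht
    exact ne_of_gt ht.1
  · filter_upwards [self_mem_nhdsWithin] with t ht
    exact ne_of_lt (lt_of_lt_of_le ht h)

lemma D1_singleton (a : ℝ) : D1 (ind {a}) := by
  have hL : ∀ x : ℝ, ∀ᶠ t in 𝓝[<] x, ind {a} t = 0 := by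
    intro x
    filter_upwards [evLt_ne x a] with t ht
    exact ind_of_not_mem ht
  refine ⟨fun x => ⟨0, hL x⟩, ⟨0, ?_⟩, ?_⟩
  · filter_upwards [eventually_ne_atTop a] with t ht
    exact ind_of_not_mem ht
  · apply Set.Finite.subset (Set.finite_singleton a)
    intro x hx
    simp only [Function.mem_support, jmp, leftL_eq (hL x), sub_zero] at hx
    by_contra h
    exact hx (ind_of_not_mem h)

lemma I1_singleton (a : ℝ) : I1 (ind {a}) = 1 := by
  have hL : ∀ x : ℝ, ∀ᶠ t in 𝓝[<] x, ind {a} t = 0 := by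
    intro x
    filter_upwards [evLt_ne x a] with t ht
    exact ind_of_not_mem ht
  have hj : ∀ x, jmp (ind {a}) x = ind {a} x := by
    intro x; rw [jmp, leftL_eq (hL x), sub_zero]
  have ht : topL (ind {a}) = 0 := by
    apply topL_eq
    filter_upwards [eventually_ne_atTop a] with t ht
    exact ind_of_not_mem ht
  rw [I1, ht, finsum_congr hj, finsum_eq_single _ a
    (fun x hx => ind_of_not_mem (by simpa using hx))]
  simp [ind_of_mem]

section OpenConvex
variable {S : Set ℝ} (hS : IsOpen S) (hc : Convex ℝ S) (hne : S.Nonempty)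

include hc in
lemma mem_of_between {s t x : ℝ} (hs : s ∈ S) (ht : t ∈ S) (h1 : s ≤ x) (h2 : x ≤ t) :
    x ∈ S := hc.ordConnected.out hs ht ⟨h1, h2⟩

include hc in
lemma leftL_ev_mem {x : ℝ} (hx : x ∈ S) (hSo : IsOpen S) :
    ∀ᶠ t in 𝓝[<] x, ind S t = 1 := by
  have : S ∈ 𝓝[<] x := nhdsWithin_le_nhds (hSo.mem_nhds hx)
  filter_upwards [this] with t ht
  exact ind_of_mem ht

include hc in
lemma leftL_ev_notmem_exists {x : ℝ} (hx : x ∉ S) (hex : ∃ s ∈ S, x < s) :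
    ∀ᶠ t in 𝓝[<] x, ind S t = 0 := by
  obtain ⟨s, hs, hxs⟩ := hex
  filter_upwards [self_mem_nhdsWithin] with t ht
  apply ind_of_not_mem
  intro htS
  exact hx (mem_of_between hc htS hs (le_of_lt (Set.mem_Iio.1 ht)) (le_of_lt hxs))

include hS hc hne in
lemma sSup_not_mem (hb : BddAbove S) : sSup S ∉ S := by
  intro hmem
  have h1 : S ∈ 𝓝 (sSup S) := hS.mem_nhds hmem
  obtain ⟨ε, hε, hball⟩ := Metric.mem_nhds_iff.1 h1
  have h2 : sSup S + ε / 2 ∈ S := by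
    apply hball
    simp [Real.ball_eq_Ioo]
    constructor <;> linarith
  have := le_csSup hb h2
  linarith

include hS hc hne in
lemma leftL_at_sSup (hb : BddAbove S) :
    ∀ᶠ t in 𝓝[<] (sSup S), ind S t = 1 := by
  obtain ⟨s₀, hs₀⟩ := id hne
  have hlt : s₀ < sSup S :=
    lt_of_le_of_ne (le_csSup hb hs₀) (by rintro rfl; exact sSup_not_mem hS hc hne hb hs₀)
  filter_upwards [Ioo_mem_nhdsLT_of_mem (Set.mem_Ioc.2 ⟨hlt, le_refl _⟩)] with t ht
  obtain ⟨s, hs, hts⟩ := exists_lt_of_lt_csSup hne ht.2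
  exact ind_of_mem (mem_of_between hc hs₀ hs (le_of_lt ht.1) (le_of_lt hts))

include hS hc hne in
lemma D1_I1_openConvex : D1 (ind S) ∧ I1 (ind S) = -1 := by
  by_cases hb : BddAbove S
  · -- bounded above case
    set b := sSup S with hbdef
    have hbnot : b ∉ S := sSup_not_mem hS hc hne hb
    -- left limits everywhere
    have hL : ∀ x : ℝ, (x ∈ S ∧ ∀ᶠ t in 𝓝[<] x, ind S t = 1) ∨
        (x = b ∧ ∀ᶠ t in 𝓝[<] x, ind S t = 1) ∨
        (x ∉ S ∧ x ≠ b ∧ ∀ᶠ t in 𝓝[<] x, ind S t = 0) := by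
      intro x
      by_cases hx : x ∈ S
      · exact Or.inl ⟨hx, leftL_ev_mem hc hx hS⟩
      by_cases hxb : x = b
      · subst hxb
        exact Or.inr (Or.inl ⟨rfl, leftL_at_sSup hS hc hne hb⟩)
      refine Or.inr (Or.inr ⟨hx, hxb, ?_⟩)
      by_cases hex : ∃ s ∈ S, x < s
      · exact leftL_ev_notmem_exists hc hx hex
      · -- x is an upper bound, x ≠ b so b < x
        push_neg at hex
        have hub : b ≤ x := csSup_le hne hex
        have hbx : b < x := lt_of_le_of_ne hub (Ne.symm hxb)
        filter_upwards [Ioo_mem_nhdsLT_of_mem (Set.mem_Ioc.2 ⟨hbx, le_refl x⟩)] with t ht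
        apply ind_of_not_mem
        intro htS
        exact absurd (le_csSup hb htS) (not_le.2 ht.1)
    have hjmp : ∀ x, x ≠ b → jmp (ind S) x = 0 := by
      intro x hxb
      rcases hL x with ⟨hx, hev⟩ | ⟨hx, _⟩ | ⟨hx, _, hev⟩
      · rw [jmp, leftL_eq hev, ind_of_mem hx]; ring
      · exact absurd hx hxb
      · rw [jmp, leftL_eq hev, ind_of_not_mem hx]; ring
    have hjb : jmp (ind S) b = -1 := by
      rw [jmp, leftL_eq (leftL_at_sSup hS hc hne hb), ind_of_not_mem hbnot]; ring
    have htop : topL (ind S) = 0 := by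
      apply topL_eq
      filter_upwards [eventually_gt_atTop b] with t ht
      exact ind_of_not_mem fun htS => absurd (le_csSup hb htS) (not_le.2 ht)
    constructor
    · refine ⟨fun x => ?_, ⟨0, ?_⟩, ?_⟩
      · rcases hL x with ⟨_, hev⟩ | ⟨_, hev⟩ | ⟨_, _, hev⟩
        exacts [⟨1, hev⟩, ⟨1, hev⟩, ⟨0, hev⟩]
      · filter_upwards [eventually_gt_atTop b] with t ht
        exact ind_of_not_mem fun htS => absurd (le_csSup hb htS) (not_le.2 ht)
      · apply Set.Finite.subset (Set.finite_singleton b)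
        intro x hx
        simp only [Function.mem_support] at hx
        by_contra h
        exact hx (hjmp x h)
    · rw [I1, htop, finsum_eq_single _ b hjmp, hjb]; ring
  · -- unbounded above
    have hex : ∀ x : ℝ, ∃ s ∈ S, x < s := by
      intro x
      rcases not_bddAbove_iff.1 hb x with ⟨s, hs, hxs⟩
      exact ⟨s, hs, hxs⟩
    have hjmp : ∀ x, jmp (ind S) x = 0 := by
      intro x
      by_cases hx : x ∈ S
      · rw [jmp, leftL_eq (leftL_ev_mem hc hx hS), ind_of_mem hx]; ring
      · rw [jmp, leftL_eq (leftL_ev_notmem_exists hc hx (hex x)), ind_of_not_mem hx]; ring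
    obtain ⟨s₀, hs₀⟩ := id hne
    have htop : topL (ind S) = 1 := by
      apply topL_eq
      filter_upwards [eventually_gt_atTop s₀] with t ht
      obtain ⟨s, hs, hts⟩ := hex t
      exact ind_of_mem (mem_of_between hc hs₀ hs (le_of_lt ht) (le_of_lt hts))
    constructor
    · refine ⟨fun x => ?_, ⟨1, ?_⟩, ?_⟩
      · by_cases hx : x ∈ S
        · exact ⟨1, leftL_ev_mem hc hx hS⟩
        · exact ⟨0, leftL_ev_notmem_exists hc hx (hex x)⟩
      · filter_upwards [eventually_gt_atTop s₀] with t ht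
        obtain ⟨s, hs, hts⟩ := hex t
        exact ind_of_mem (mem_of_between hc hs₀ hs (le_of_lt ht) (le_of_lt hts))
      · simp [Function.support, hjmp]
    · rw [I1, htop, finsum_congr hjmp]
      simp

end OpenConvex

section Dim
variable {W : Type*} [NormedAddCommGroup W] [NormedSpace ℝ W] [FiniteDimensional ℝ W]

lemma direction_of_cell {p q : ℕ} (f : Fin p → (W →ᵃ[ℝ] ℝ)) (g : Fin q → (W →ᵃ[ℝ] ℝ))
    (hne : {x : W | (∀ i, f i x = 0) ∧ ∀ j, 0 < g j x}.Nonempty) :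
    (affineSpan ℝ {x : W | (∀ i, f i x = 0) ∧ ∀ j, 0 < g j x}).direction
      = ⨅ i, LinearMap.ker (f i).linear := by
  set C := {x : W | (∀ i, f i x = 0) ∧ ∀ j, 0 < g j x} with hC
  apply le_antisymm
  · rw [direction_affineSpan, vectorSpan_def]
    apply Submodule.span_le.2
    rintro v hv
    obtain ⟨u, hu, w, hw, rfl⟩ := Set.mem_vsub.1 hv
    simp only [SetLike.mem_coe, Submodule.mem_iInf]
    intro i
    rw [LinearMap.mem_ker]
    have : (f i).linear (u -ᵥ w) = f i u -ᵥ f i w := (f i).linearMap_vsub u w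
    rw [this, hu.1 i, hw.1 i]
    simp
  · intro v hv
    obtain ⟨x₀, hx₀⟩ := hne
    have hUopen : IsOpen {x : W | ∀ j, 0 < g j x} := by
      have : {x : W | ∀ j, 0 < g j x} = ⋂ j, (g j) ⁻¹' (Set.Ioi 0) := by
        ext x; simp [Set.mem_iInter]
      rw [this]
      exact isOpen_iInter_of_finite fun j =>
        isOpen_Ioi.preimage (g j).continuous_of_finiteDimensional
    have hγ : Continuous fun ε : ℝ => ε • v + x₀ := by continuity
    have h0 : (fun ε : ℝ => ε • v + x₀) 0 ∈ {x : W | ∀ j, 0 < g j x} := by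
      simpa using hx₀.2
    have hpre : (fun ε : ℝ => ε • v + x₀) ⁻¹' {x : W | ∀ j, 0 < g j x} ∈ 𝓝 (0 : ℝ) :=
      hγ.continuousAt.preimage_mem_nhds (hUopen.mem_nhds h0)
    obtain ⟨ε, hε, hball⟩ := Metric.mem_nhds_iff.1 hpre
    have hεmem : (ε / 2) • v + x₀ ∈ C := by
      constructor
      · intro i
        have : f i ((ε / 2) • v + x₀) = (f i).linear ((ε / 2) • v) + f i x₀ := by
          have := (f i).map_vadd x₀ ((ε / 2) • v)
          simpa [vadd_eq_add] using this
        rw [this, hx₀.1 i]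
        have hker : (f i).linear v = 0 := by
          have := (Submodule.mem_iInf _).1 hv i
          exact LinearMap.mem_ker.1 this
        simp [map_smul, hker]
      · exact hball (by simp [Real.dist_eq, abs_of_pos hε, abs_of_nonneg (le_of_lt (half_pos hε))]; linarith)
    have hvs : (ε / 2) • v ∈ vectorSpan ℝ C := by
      have := vsub_mem_vectorSpan ℝ hεmem hx₀
      simpa [vsub_eq_sub] using this
    have : v = (ε / 2)⁻¹ • ((ε / 2) • v) := by
      rw [smul_smul, inv_mul_cancel₀ (by positivity), one_smul]
    rw [direction_affineSpan, this]
    exact Submodule.smul_mem _ _ hvs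

lemma cellDim_image {W₁ W₂ : Type*} [AddCommGroup W₁] [Module ℝ W₁]
    [AddCommGroup W₂] [Module ℝ W₂] (φ : W₁ →ᵃ[ℝ] W₂) (hφ : Function.Injective φ)
    (s : Set W₁) : cellDim (φ '' s) = cellDim s := by
  rw [cellDim, cellDim, ← AffineSubspace.map_span, AffineSubspace.map_direction]
  exact (LinearEquiv.finrank_eq
    (Submodule.equivMapOfInjective φ.linear (φ.linear_injective_iff.2 hφ) _)).symm

end Dim

section Slice
variable {W : Type*} [NormedAddCommGroup W] [NormedSpace ℝ W] [FiniteDimensional ℝ W]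

lemma ind_slice (C : Set (W × ℝ)) (y : W) (t : ℝ) :
    ind C (y, t) = ind {s : ℝ | (y, s) ∈ C} t := by
  by_cases h : (y, t) ∈ C <;> simp [ind, h]

lemma affine_decomp (φ : (W × ℝ) →ᵃ[ℝ] ℝ) (y : W) (t : ℝ) :
    φ (y, t) = φ (y, 0) + t * φ.linear (0, 1) := by
  have h : ((y, t) : W × ℝ) = ((0 : W), t) +ᵥ (y, (0 : ℝ)) := by
    simp [Prod.ext_iff]
  rw [h, φ.map_vadd]
  have h2 : (((0 : W), t) : W × ℝ) = t • ((0 : W), (1 : ℝ)) := by simp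
  rw [h2, map_smul]
  simp [smul_eq_mul]
  ring

lemma linear_decomp (φ : (W × ℝ) →ᵃ[ℝ] ℝ) (v : W) (s : ℝ) :
    φ.linear (v, s) = φ.linear (v, 0) + s * φ.linear (0, 1) := by
  have h : ((v, s) : W × ℝ) = (v, 0) + s • ((0 : W), (1 : ℝ)) := by simp [Prod.ext_iff]
  rw [h, map_add, map_smul, smul_eq_mul]

/-- The graph of an affine map, as an affine map. -/
noncomputable def graphMap (α : W →ᵃ[ℝ] ℝ) : W →ᵃ[ℝ] W × ℝ where
  toFun y := (y, α y)
  linear := LinearMap.prod LinearMap.id α.linear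
  map_vadd' p v := by
    ext
    · simp
    · exact α.map_vadd p v

lemma graphMap_injective (α : W →ᵃ[ℝ] ℝ) : Function.Injective (graphMap α) :=
  fun a b h => congrArg Prod.fst h

lemma convex_slice (a dd : ℝ) : Convex ℝ {t : ℝ | 0 < a + t * dd} := by
  rcases lt_trichotomy dd 0 with hd | hd | hd
  · have : {t : ℝ | 0 < a + t * dd} = Set.Iio (a / (-dd)) := by
      ext t
      simp only [Set.mem_setOf_eq, Set.mem_Iio]
      rw [lt_div_iff₀ (by linarith : (0:ℝ) < -dd)]
      constructor <;> intro <;> nlinarith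
    rw [this]; exact convex_Iio _
  · subst hd
    by_cases ha : 0 < a
    · have : {t : ℝ | 0 < a + t * 0} = Set.univ := by ext t; simp [ha]
      rw [this]; exact convex_univ
    · have : {t : ℝ | 0 < a + t * 0} = ∅ := by ext t; simp [ha]
      rw [this]; exact convex_empty
  · have : {t : ℝ | 0 < a + t * dd} = Set.Ioi ((-a) / dd) := by
      ext t
      simp only [Set.mem_setOf_eq, Set.mem_Ioi]
      rw [div_lt_iff₀ hd]
      constructor <;> intro <;> nlinarith
    rw [this]; exact convex_Ioi _

lemma exists_slice_point {q : ℕ} (a d : Fin q → ℝ)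
    (hz : ∀ j, d j = 0 → 0 < a j)
    (hpair : ∀ j k, 0 < d j → d k < 0 → 0 < d j * a k - d k * a j) :
    ∃ t : ℝ, ∀ j, 0 < a j + t * d j := by
  classical
  set P := Finset.univ.filter (fun j => 0 < d j) with hP
  set N := Finset.univ.filter (fun j => d j < 0) with hN
  have key : ∀ t : ℝ, (∀ j ∈ P, -(a j) / d j < t) → (∀ j ∈ N, t < a j / (-(d j))) →
      ∀ j, 0 < a j + t * d j := by
    intro t h1 h2 j
    rcases lt_trichotomy (d j) 0 with hd | hd | hd
    · have hj : j ∈ N := by simp [hN, hd]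
      have := h2 j hj
      rw [lt_div_iff₀ (by linarith : (0:ℝ) < -(d j))] at this
      nlinarith
    · have := hz j hd
      simp [hd]; linarith
    · have hj : j ∈ P := by simp [hP, hd]
      have := h1 j hj
      rw [div_lt_iff₀ hd] at this
      nlinarith
  by_cases hPne : P.Nonempty <;> by_cases hNne : N.Nonempty
  · set L := P.sup' hPne (fun j => -(a j) / d j) with hL
    set M := N.inf' hNne (fun j => a j / (-(d j))) with hM
    have hLM : L < M := by
      obtain ⟨j, hj, hjeq⟩ := Finset.exists_mem_eq_sup' hPne (fun j => -(a j) / d j)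
      obtain ⟨k, hk, hkeq⟩ := Finset.exists_mem_eq_inf' hNne (fun j => a j / (-(d j)))
      have hdj : 0 < d j := by simpa [hP] using hj
      have hdk : d k < 0 := by simpa [hN] using hk
      have hp := hpair j k hdj hdk
      rw [hL, hM, hjeq, hkeq, div_lt_div_iff₀ hdj (by linarith : (0:ℝ) < -(d k))]
      nlinarith
    refine ⟨(L + M) / 2, key _ (fun j hj => ?_) (fun j hj => ?_)⟩
    · have := Finset.le_sup' (fun j => -(a j) / d j) hj
      simp only [← hL] at this
      linarith
    · have := Finset.inf'_le (fun j => a j / (-(d j))) hj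
      simp only [← hM] at this
      linarith
  · set L := P.sup' hPne (fun j => -(a j) / d j) with hL
    refine ⟨L + 1, key _ (fun j hj => ?_) (fun j hj => absurd ⟨j, hj⟩ hNne)⟩
    have := Finset.le_sup' (fun j => -(a j) / d j) hj
    simp only [← hL] at this
    linarith
  · set M := N.inf' hNne (fun j => a j / (-(d j))) with hM
    refine ⟨M - 1, key _ (fun j hj => absurd ⟨j, hj⟩ hPne) (fun j hj => ?_)⟩
    have := Finset.inf'_le (fun j => a j / (-(d j))) hj
    simp only [← hM] at this
    linarith
  · exact ⟨0, key 0 (fun j hj => absurd ⟨j, hj⟩ hPne) (fun j hj => absurd ⟨j, hj⟩ hNne)⟩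

lemma finrank_prod_top {M : Type*} [AddCommGroup M] [Module ℝ M] [FiniteDimensional ℝ M]
    (K : Submodule ℝ M) :
    Module.finrank ℝ (K.prod (⊤ : Submodule ℝ ℝ)) = Module.finrank ℝ K + 1 := by
  have e : (K.prod (⊤ : Submodule ℝ ℝ)) ≃ₗ[ℝ] K × ℝ :=
    { toFun := fun x => (⟨x.1.1, x.2.1⟩, x.1.2)
      invFun := fun y => ⟨(y.1.1, y.2), ⟨y.1.2, trivial⟩⟩
      map_add' := fun a b => rfl
      map_smul' := fun c a => rfl
      left_inv := fun a => rfl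
      right_inv := fun a => rfl }
  rw [LinearEquiv.finrank_eq e, Module.finrank_prod, Module.finrank_self]

set_option maxHeartbeats 1000000 in
lemma slice_lemma {C : Set (W × ℝ)} (hC : IsPolyhedralCell C) :
    ∃ (C' : Set W) (ε : ℤ), IsPolyhedralCell C' ∧
      (∀ y : W, D1 (fun t => ind C (y, t))) ∧
      (∀ y : W, I1 (fun t => ind C (y, t)) = ε * ind C' y) ∧
      (ε * (-1) ^ cellDim C' = (-1) ^ cellDim C) := by
  classical
  obtain ⟨hne, p, q, f, g, hCeq⟩ := hC
  by_cases hcase : ∃ i₀, (f i₀).linear (0, 1) ≠ 0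
  · -- Case 1: some equality constraint involves the last coordinate
    obtain ⟨i₀, hi₀⟩ := hcase
    set c : ℝ := (f i₀).linear (0, 1) with hc
    set ι : W →ᵃ[ℝ] W × ℝ := (LinearMap.inl ℝ W ℝ).toAffineMap with hιdef
    set α : W →ᵃ[ℝ] ℝ := (-c⁻¹) • ((f i₀).comp ι) with hαdef
    have hα : ∀ y : W, α y = -c⁻¹ * f i₀ (y, 0) := fun y => rfl
    set ψ : W →ᵃ[ℝ] W × ℝ := graphMap α with hψdef
    have hψ : ∀ y : W, ψ y = (y, α y) := fun y => rfl
    have hmemα : ∀ y t, (y, t) ∈ C → t = α y := by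
      intro y t hyt
      rw [hCeq] at hyt
      have h0 := hyt.1 i₀
      rw [affine_decomp (f i₀) y t, ← hc] at h0
      rw [hα]
      field_simp
      linarith
    set C' : Set W := {y | (∀ i, (f i).comp ψ y = 0) ∧ ∀ j, 0 < (g j).comp ψ y} with hC'
    have hmem' : ∀ y : W, y ∈ C' ↔ ψ y ∈ C := by
      intro y
      rw [hC', hCeq]
      rfl
    have himg : C = ψ '' C' := by
      ext x
      rcases x with ⟨y, t⟩
      constructor
      · intro hx
        have ht := hmemα y t hx
        refine ⟨y, ?_, ?_⟩
        · rw [hmem', hψ, ← ht]; exact hx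
        · rw [hψ, ← ht]
      · rintro ⟨y', hy', h⟩
        rw [← h]
        exact (hmem' y').1 hy'
    have hC'ne : C'.Nonempty := by
      obtain ⟨x, hx⟩ := hne
      rw [himg] at hx
      obtain ⟨y, hy, _⟩ := hx
      exact ⟨y, hy⟩
    have hC'cell : IsPolyhedralCell C' :=
      ⟨hC'ne, p, q, fun i => (f i).comp ψ, fun j => (g j).comp ψ, rfl⟩
    refine ⟨C', 1, hC'cell, ?_, ?_, ?_⟩
    · intro y
      by_cases hy : y ∈ C'
      · have hset : {s : ℝ | (y, s) ∈ C} = {α y} := by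
          ext t
          simp only [Set.mem_setOf_eq, Set.mem_singleton_iff]
          constructor
          · exact hmemα y t
          · rintro rfl
            exact (hmem' y).1 hy
        have : (fun t => ind C (y, t)) = ind {α y} := by
          funext t
          rw [ind_slice, hset]
        rw [this]
        exact D1_singleton (α y)
      · have hset : (fun t => ind C (y, t)) = (0 : ℝ → ℤ) := by
          funext t
          rw [ind_slice]
          have : {s : ℝ | (y, s) ∈ C} = ∅ := by
            ext s
            simp only [Set.mem_setOf_eq, Set.mem_empty_iff_false, iff_false]
            intro hs
            apply hy
            have ht := hmemα y s hs
            rw [hmem', hψ, ← ht]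
            exact hs
          rw [this, ind_empty]
        rw [hset]
        exact D1.zero
    · intro y
      by_cases hy : y ∈ C'
      · have hset : {s : ℝ | (y, s) ∈ C} = {α y} := by
          ext t
          simp only [Set.mem_setOf_eq, Set.mem_singleton_iff]
          constructor
          · exact hmemα y t
          · rintro rfl
            exact (hmem' y).1 hy
        have h1 : (fun t => ind C (y, t)) = ind {α y} := by
          funext t
          rw [ind_slice, hset]
        rw [h1, I1_singleton, ind_of_mem hy]
        ring
      · have hset : (fun t => ind C (y, t)) = (0 : ℝ → ℤ) := by
          funext t
          rw [ind_slice]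
          have : {s : ℝ | (y, s) ∈ C} = ∅ := by
            ext s
            simp only [Set.mem_setOf_eq, Set.mem_empty_iff_false, iff_false]
            intro hs
            apply hy
            have ht := hmemα y s hs
            rw [hmem', hψ, ← ht]
            exact hs
          rw [this, ind_empty]
        rw [hset, I1_zero, ind_of_not_mem hy]
        ring
    · have : cellDim C = cellDim C' := by
        rw [himg]
        exact cellDim_image ψ (graphMap_injective α) C'
      rw [this]
      ring
  · -- Case 2: no equality constraint involves the last coordinate
    push_neg at hcase
    set ι : W →ᵃ[ℝ] W × ℝ := (LinearMap.inl ℝ W ℝ).toAffineMap with hιdef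
    set d : Fin q → ℝ := fun j => (g j).linear (0, 1) with hd
    set G : (Fin q ⊕ Fin q × Fin q) → (W →ᵃ[ℝ] ℝ) := fun s =>
      Sum.elim
        (fun j => if d j = 0 then (g j).comp ι else AffineMap.const ℝ W (1 : ℝ))
        (fun jk => if 0 < d jk.1 ∧ d jk.2 < 0 then
            d jk.1 • ((g jk.2).comp ι) - d jk.2 • ((g jk.1).comp ι)
          else AffineMap.const ℝ W (1 : ℝ)) s with hG
    set e : (Fin q ⊕ Fin q × Fin q) ≃ Fin (q + q * q) :=
      (Equiv.sumCongr (Equiv.refl (Fin q)) finProdFinEquiv).trans finSumFinEquiv with he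
    set g' : Fin (q + q * q) → (W →ᵃ[ℝ] ℝ) := fun k => G (e.symm k) with hg'
    set C' : Set W := {y | (∀ i, (f i).comp ι y = 0) ∧ ∀ k, 0 < g' k y} with hC'
    have hιy : ∀ y : W, ι y = (y, 0) := fun y => rfl
    have hGval : ∀ (j k : Fin q) (y : W),
        (d j • ((g k).comp ι) - d k • ((g j).comp ι)) y
          = d j * g k (y, 0) - d k * g j (y, 0) := by
      intro j k y
      have h1 : ((g k).comp ι) y = g k (y, 0) := rfl
      have h2 : ((g j).comp ι) y = g j (y, 0) := rfl
      simp only [AffineMap.coe_sub, AffineMap.coe_smul, Pi.sub_apply, Pi.smul_apply,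
        smul_eq_mul, h1, h2]
    -- characterize membership in C'
    have hC'iff : ∀ y : W, y ∈ C' ↔
        ((∀ i, f i (y, 0) = 0) ∧ (∀ j, d j = 0 → 0 < g j (y, 0)) ∧
         (∀ j k, 0 < d j → d k < 0 → 0 < d j * g k (y, 0) - d k * g j (y, 0))) := by
      intro y
      rw [hC']
      simp only [Set.mem_setOf_eq]
      have hforall : (∀ k, 0 < g' k y) ↔ ∀ s, 0 < G s y := by
        constructor
        · intro h s
          have := h (e s)
          simpa only [hg', Equiv.symm_apply_apply] using this
        · intro h k
          exact h (e.symm k)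
      rw [hforall]
      constructor
      · rintro ⟨h1, h2⟩
        refine ⟨fun i => h1 i, fun j hj => ?_, fun j k hj hk => ?_⟩
        · have := h2 (Sum.inl j)
          simp only [hG, Sum.elim_inl] at this
          simpa [hj, hιy] using this
        · have := h2 (Sum.inr (j, k))
          simp only [hG, Sum.elim_inr] at this
          rw [if_pos (show 0 < d j ∧ d k < 0 from ⟨hj, hk⟩), hGval] at this
          linarith
      · rintro ⟨h1, h2, h3⟩
        refine ⟨fun i => h1 i, ?_⟩
        rintro (j | ⟨j, k⟩)
        · simp only [hG, Sum.elim_inl]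
          by_cases hj : d j = 0
          · simpa [hj, hιy] using h2 j hj
          · simp [hj, AffineMap.const_apply]
        · simp only [hG, Sum.elim_inr]
          by_cases hjk : 0 < d j ∧ d k < 0
          · rw [if_pos hjk, hGval]
            have := h3 j k hjk.1 hjk.2
            linarith
          · simp [hjk, AffineMap.const_apply]
    -- characterize the slice
    have hslice : ∀ y t, ((y, t) ∈ C ↔ (∀ i, f i (y, 0) = 0) ∧ ∀ j, 0 < g j (y, 0) + t * d j) := by
      intro y t
      rw [hCeq]
      simp only [Set.mem_setOf_eq]
      constructor
      · rintro ⟨h1, h2⟩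
        constructor
        · intro i
          have := h1 i
          rw [affine_decomp (f i) y t, hcase i] at this
          simpa using this
        · intro j
          have := h2 j
          rwa [affine_decomp (g j) y t] at this
      · rintro ⟨h1, h2⟩
        constructor
        · intro i
          rw [affine_decomp (f i) y t, hcase i]
          simpa using h1 i
        · intro j
          rw [affine_decomp (g j) y t]
          exact h2 j
    -- slice nonempty implies y ∈ C'
    have hrev : ∀ y t, (y, t) ∈ C → y ∈ C' := by
      intro y t hyt
      rw [hslice] at hyt
      obtain ⟨h1, h2⟩ := hyt
      rw [hC'iff]
      refine ⟨h1, fun j hj => ?_, fun j k hj hk => ?_⟩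
      · have := h2 j
        simpa [hj] using this
      · have hj2 := h2 j
        have hk2 := h2 k
        nlinarith [mul_pos hj hk2, mul_pos (neg_pos.2 hk) hj2]
    have hC'ne : C'.Nonempty := by
      obtain ⟨⟨y, t⟩, hx⟩ := hne
      exact ⟨y, hrev y t hx⟩
    have hC'cell : IsPolyhedralCell C' :=
      ⟨hC'ne, p, q + q * q, fun i => (f i).comp ι, g', rfl⟩
    have hcomp : ∀ (i : Fin p) (v : W), ((f i).comp ι).linear v = (f i).linear (v, 0) :=
      fun i v => rfl
    clear_value C' g' G e d ι
    -- slice set analysis for y ∈ C'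
    have hsliceset : ∀ y : W, y ∈ C' →
        {s : ℝ | (y, s) ∈ C} = {s : ℝ | ∀ j, 0 < g j (y, 0) + s * d j} := by
      intro y hy
      ext t
      rw [Set.mem_setOf_eq, hslice]
      have h1 := ((hC'iff y).1 hy).1
      simp only [Set.mem_setOf_eq]
      tauto
    have hT : ∀ y : W, y ∈ C' → D1 (ind {s : ℝ | ∀ j, 0 < g j (y, 0) + s * d j}) ∧
        I1 (ind {s : ℝ | ∀ j, 0 < g j (y, 0) + s * d j}) = -1 := by
      intro y hy
      apply D1_I1_openConvex
      · have : {s : ℝ | ∀ j, 0 < g j (y, 0) + s * d j}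
            = ⋂ j, (fun s : ℝ => g j (y, 0) + s * d j) ⁻¹' Set.Ioi 0 := by
          ext s; simp [Set.mem_iInter]
        rw [this]
        exact isOpen_iInter_of_finite fun j =>
          (isOpen_Ioi).preimage (continuous_const.add (continuous_id.mul continuous_const))
      · have : {s : ℝ | ∀ j, 0 < g j (y, 0) + s * d j}
            = ⋂ j, {s : ℝ | 0 < g j (y, 0) + s * d j} := by
          ext s; simp [Set.mem_iInter]
        rw [this]
        exact convex_iInter fun j => convex_slice _ _
      · rw [hC'iff] at hy
        obtain ⟨t, ht⟩ := exists_slice_point (fun j => g j (y, 0)) d hy.2.1 hy.2.2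
        exact ⟨t, ht⟩
    have hempty : ∀ y : W, y ∉ C' → (fun t => ind C (y, t)) = (0 : ℝ → ℤ) := by
      intro y hy
      funext t
      rw [ind_slice]
      have : {s : ℝ | (y, s) ∈ C} = ∅ := by
        ext s
        simp only [Set.mem_setOf_eq, Set.mem_empty_iff_false, iff_false]
        intro hs
        exact hy (hrev y s hs)
      rw [this, ind_empty]
    refine ⟨C', -1, hC'cell, ?_, ?_, ?_⟩
    · intro y
      by_cases hy : y ∈ C'
      · have h1 : (fun t => ind C (y, t)) = ind {s : ℝ | ∀ j, 0 < g j (y, 0) + s * d j} := by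
          funext t
          rw [ind_slice, hsliceset y hy]
        rw [h1]
        exact (hT y hy).1
      · rw [hempty y hy]
        exact D1.zero
    · intro y
      by_cases hy : y ∈ C'
      · have h1 : (fun t => ind C (y, t)) = ind {s : ℝ | ∀ j, 0 < g j (y, 0) + s * d j} := by
          funext t
          rw [ind_slice, hsliceset y hy]
        rw [h1, (hT y hy).2, ind_of_mem hy]
        ring
      · rw [hempty y hy, I1_zero, ind_of_not_mem hy]
        ring
    · -- dimension count
      have hdimC : cellDim C = Module.finrank ℝ ↥(⨅ i, LinearMap.ker (f i).linear) := by
        show Module.finrank ℝ (affineSpan ℝ C).direction = _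
        rw [hCeq, direction_of_cell f g (hCeq ▸ hne)]
      have hdimC' : cellDim C'
          = Module.finrank ℝ ↥(⨅ i, LinearMap.ker ((f i).comp ι).linear) := by
        show Module.finrank ℝ (affineSpan ℝ C').direction = _
        rw [hC', direction_of_cell (fun i => (f i).comp ι) g' (hC' ▸ hC'ne)]
      have hprod : (⨅ i, LinearMap.ker (f i).linear)
          = (⨅ i, LinearMap.ker ((f i).comp ι).linear).prod (⊤ : Submodule ℝ ℝ) := by
        ext x
        rcases x with ⟨v, s⟩
        simp only [Submodule.mem_iInf, LinearMap.mem_ker, Submodule.mem_prod,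
          Submodule.mem_top, and_true]
        constructor
        · intro h i
          rw [hcomp]
          have := h i
          rw [linear_decomp (f i) v s, hcase i] at this
          simpa using this
        · intro h i
          rw [linear_decomp (f i) v s, hcase i]
          have := h i
          rw [hcomp] at this
          simpa using this
      rw [hdimC, hdimC', hprod, finrank_prod_top, pow_succ]
      ring

end Slice

section Assembly

variable {W₁ W₂ : Type*} [AddCommGroup W₁] [Module ℝ W₁] [AddCommGroup W₂] [Module ℝ W₂]

lemma ind_comp_equiv (e : W₁ ≃ₗ[ℝ] W₂) (C : Set W₁) :
    ind C ∘ ⇑e.symm = ind (⇑e '' C) := by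
  funext x
  have hiff : e.symm x ∈ C ↔ x ∈ ⇑e '' C := by
    constructor
    · intro h; exact ⟨e.symm x, h, by simp⟩
    · rintro ⟨y, hy, rfl⟩; simpa using hy
  by_cases h : e.symm x ∈ C
  · simp [Function.comp, ind, h, hiff.1 h]
  · have h2 : x ∉ ⇑e '' C := fun hx => h (hiff.2 hx)
    simp [Function.comp, ind, h, h2]

lemma isCell_image (e : W₁ ≃ₗ[ℝ] W₂) {C : Set W₁} (hC : IsPolyhedralCell C) :
    IsPolyhedralCell (⇑e '' C) := by
  obtain ⟨hne, p, q, f, g, hCeq⟩ := hC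
  refine ⟨hne.image _, p, q, fun i => (f i).comp e.symm.toLinearMap.toAffineMap,
    fun j => (g j).comp e.symm.toLinearMap.toAffineMap, ?_⟩
  ext x
  have happ : ∀ (φ : W₁ →ᵃ[ℝ] ℝ), φ.comp e.symm.toLinearMap.toAffineMap x = φ (e.symm x) :=
    fun φ => rfl
  constructor
  · rintro ⟨y, hy, rfl⟩
    rw [hCeq] at hy
    simp only [Set.mem_setOf_eq, happ, LinearEquiv.symm_apply_apply]
    exact hy
  · intro hx
    refine ⟨e.symm x, ?_, by simp⟩
    rw [hCeq]
    simp only [Set.mem_setOf_eq, happ] at hx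
    exact hx

lemma cellDim_image_equiv (e : W₁ ≃ₗ[ℝ] W₂) (C : Set W₁) :
    cellDim (⇑e '' C) = cellDim C := by
  have h : ⇑e '' C = ⇑(e.toLinearMap.toAffineMap) '' C := rfl
  rw [h]
  exact cellDim_image e.toLinearMap.toAffineMap (fun a b hab => by
    have : e a = e b := hab
    exact e.injective this) C

lemma euler_transfer (e : W₁ ≃ₗ[ℝ] W₂) :
    (∃ I : PolF W₂ →+ ℤ, IsEulerHom I) → ∃ I : PolF W₁ →+ ℤ, IsEulerHom I := by
  rintro ⟨E, hE⟩
  let Φ : (W₁ → ℤ) →+ (W₂ → ℤ) := AddMonoidHom.mk' (fun f => f ∘ ⇑e.symm) (fun a b => rfl)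
  have hΦ : PolF W₁ ≤ (PolF W₂).comap Φ := by
    rw [PolF, AddSubgroup.closure_le]
    rintro h ⟨C, hC, rfl⟩
    show Φ (ind C) ∈ PolF W₂
    have : Φ (ind C) = ind (⇑e '' C) := ind_comp_equiv e C
    rw [this]
    exact ind_mem_PolF (isCell_image e hC)
  refine ⟨E.comp (AddMonoidHom.mk'
    (fun fh : PolF W₁ => (⟨Φ fh.1, hΦ fh.2⟩ : PolF W₂))
    (fun a b => Subtype.ext (by simp))), ?_⟩
  intro C hC
  have hkey : (⟨Φ (ind C), hΦ (ind_mem_PolF hC)⟩ : PolF W₂)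
      = ⟨ind (⇑e '' C), ind_mem_PolF (isCell_image e hC)⟩ :=
    Subtype.ext (ind_comp_equiv e C)
  show E ⟨Φ (ind C), hΦ (ind_mem_PolF hC)⟩ = _
  rw [hkey, hE _ (isCell_image e hC), cellDim_image_equiv e C]

end Assembly

section Step
variable {W : Type*} [NormedAddCommGroup W] [NormedSpace ℝ W] [FiniteDimensional ℝ W]

lemma euler_step (h : ∃ I : PolF W →+ ℤ, IsEulerHom I) :
    ∃ I : PolF (W × ℝ) →+ ℤ, IsEulerHom I := by
  obtain ⟨E, hE⟩ := h
  classical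
  let Pmap : ((W × ℝ) → ℤ) → (W → ℤ) := fun F y => I1 (fun t => F (y, t))
  let G : AddSubgroup ((W × ℝ) → ℤ) :=
    { carrier := {F | (∀ y : W, D1 (fun t => F (y, t))) ∧ Pmap F ∈ PolF W}
      zero_mem' := by
        refine ⟨fun y => D1.zero, ?_⟩
        have : Pmap 0 = 0 := by
          funext y
          exact I1_zero
        rw [this]
        exact zero_mem _
      add_mem' := by
        rintro a b ⟨ha1, ha2⟩ ⟨hb1, hb2⟩
        refine ⟨fun y => (ha1 y).add (hb1 y), ?_⟩
        have : Pmap (a + b) = Pmap a + Pmap b := by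
          funext y
          exact (ha1 y).I1_add (hb1 y)
        rw [this]
        exact add_mem ha2 hb2
      neg_mem' := by
        rintro a ⟨ha1, ha2⟩
        refine ⟨fun y => (ha1 y).neg, ?_⟩
        have : Pmap (-a) = -Pmap a := by
          funext y
          exact (ha1 y).I1_neg
        rw [this]
        exact neg_mem ha2 }
  have hsub : PolF (W × ℝ) ≤ G := by
    rw [PolF, AddSubgroup.closure_le]
    rintro F ⟨C, hC, rfl⟩
    obtain ⟨C', ε, hC', hD1, hI1, _⟩ := slice_lemma hC
    refine ⟨hD1, ?_⟩
    show Pmap (ind C) ∈ PolF W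
    have : Pmap (ind C) = ε • ind C' := by
      funext y
      rw [show (ε • ind C') y = ε * ind C' y from rfl]
      exact hI1 y
    rw [this]
    exact zsmul_mem (ind_mem_PolF hC') ε
  let P' : PolF (W × ℝ) →+ PolF W := AddMonoidHom.mk'
    (fun F => ⟨Pmap F.1, (hsub F.2).2⟩)
    (by
      rintro a b
      apply Subtype.ext
      funext y
      exact ((hsub a.2).1 y).I1_add ((hsub b.2).1 y))
  refine ⟨E.comp P', ?_⟩
  intro C hC
  obtain ⟨C', ε, hC', hD1, hI1, hdim⟩ := slice_lemma hC
  have hkey : P' ⟨ind C, ind_mem_PolF hC⟩ = ε • ⟨ind C', ind_mem_PolF hC'⟩ := by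
    apply Subtype.ext
    funext y
    have h1 : ((ε • (⟨ind C', ind_mem_PolF hC'⟩ : PolF W)) : PolF W).1 y = ε * ind C' y := rfl
    rw [h1]
    exact hI1 y
  show E (P' ⟨ind C, ind_mem_PolF hC⟩) = _
  rw [hkey, map_zsmul, hE _ hC']
  rw [← hdim]
  simp [zsmul_eq_mul]

end Step

lemma euler_base : ∃ I : PolF (Fin 0 → ℝ) →+ ℤ, IsEulerHom I := by
  refine ⟨(Pi.evalAddMonoidHom (fun _ : Fin 0 → ℝ => ℤ) default).comp
    (PolF (Fin 0 → ℝ)).subtype, ?_⟩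
  intro C hC
  obtain ⟨⟨x, hx⟩, _⟩ := hC
  have hdim : cellDim C = 0 := by
    have h1 : Module.finrank ℝ (Fin 0 → ℝ) = 0 := by simp [Module.finrank_fin_fun]
    have h2 := Submodule.finrank_le (affineSpan ℝ C).direction
    rw [h1] at h2
    exact Nat.le_zero.1 h2
  have hxd : (default : Fin 0 → ℝ) ∈ C := by
    have : (default : Fin 0 → ℝ) = x := Subsingleton.elim _ _
    rw [this]; exact hx
  show ind C default = _
  rw [hdim, pow_zero, ind_of_mem hxd]

lemma euler_fin : ∀ n : ℕ, ∃ I : PolF (Fin n → ℝ) →+ ℤ, IsEulerHom I := by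
  intro n
  induction n with
  | zero => exact euler_base
  | succ n ih =>
    have hfr : Module.finrank ℝ (Fin (n + 1) → ℝ)
        = Module.finrank ℝ ((Fin n → ℝ) × ℝ) := by
      rw [Module.finrank_fin_fun, Module.finrank_prod, Module.finrank_fin_fun,
        Module.finrank_self]
    exact euler_transfer (LinearEquiv.ofFinrankEq _ _ hfr) (euler_step ih)


/-- For a finite-dimensional real vector space `V` there is a unique
group homomorphism `I : PolF V →+ ℤ` with `I (1_C) = (-1) ^ dim C` for every
polyhedral cell `C ⊆ V` (integration against Euler-characteristic measure). -/
theorem statement0 (V : Type*) [AddCommGroup V] [Module ℝ V] [FiniteDimensional ℝ V] :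
    ∃! I : PolF V →+ ℤ, IsEulerHom I := by
  have hex : ∃ I : PolF V →+ ℤ, IsEulerHom I := by
    have hfr : Module.finrank ℝ V = Module.finrank ℝ (Fin (Module.finrank ℝ V) → ℝ) := by
      rw [Module.finrank_fin_fun]
    exact euler_transfer (LinearEquiv.ofFinrankEq _ _ hfr) (euler_fin _)
  obtain ⟨I, hI⟩ := hex
  refine ⟨I, hI, ?_⟩
  intro J hJ
  apply AddMonoidHom.ext
  rintro ⟨fx, hfx⟩
  refine AddSubgroup.closure_induction
    (p := fun f hf => J ⟨f, hf⟩ = I ⟨f, hf⟩) ?_ ?_ ?_ ?_ hfx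
  · rintro f ⟨C, hC, rfl⟩
    exact (hJ C hC).trans (hI C hC).symm
  · show J 0 = I 0
    rw [map_zero, map_zero]
  · intro x y hx hy hpx hpy
    show J (⟨x, hx⟩ + ⟨y, hy⟩) = I (⟨x, hx⟩ + ⟨y, hy⟩)
    rw [map_add, map_add, hpx, hpy]
  · intro x hx hpx
    show J (-⟨x, hx⟩) = I (-⟨x, hx⟩)
    rw [map_neg, map_neg, hpx]
end

section
/- Let V be a finite-dimensional real vector space and let σ ⊆ V be a pointed closed convex polyhedral cone, with dual cone σ^∨ = {ξ ∈ V* : ξ(x) ≥ 0 for all x ∈ σ}. Then for every ξ ∈ V*, I(1_{σ ∩ {x : ξ(x) ≤ 1}}) equals 1 if ξ lies in the topological interior of σ^∨, and equals 0 otherwise. (This is the formula FT(i_σ) = (−1)^{dim σ^∨} j_{σ^∨} for the Fourier–Sato transform of the standard indicator function of σ.) -/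
/-- A (closed convex) polyhedral cone: a finite intersection of closed linear
half-spaces `{x | 0 ≤ α x}` for linear functionals `α`. -/
def IsPolyhedralCone {W : Type*} [AddCommGroup W] [Module ℝ W] (σ : Set W) : Prop :=
  ∃ (p : ℕ) (α : Fin p → (W →ₗ[ℝ] ℝ)), σ = {x | ∀ i, 0 ≤ α i x}

-- ============ auxiliary development ============
open Set BigOperators Classical
set_option linter.unusedSectionVars false
set_option linter.unnecessarySimpa false

noncomputable section

namespace EulerAux

variable {V : Type*} [NormedAddCommGroup V] [NormedSpace ℝ V] [FiniteDimensional ℝ V]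

/-- `EVal I g m`: `g` is a polyhedral function with Euler integral `m`. -/
def EVal (I : PolF V →+ ℤ) (g : V → ℤ) (m : ℤ) : Prop :=
  ∃ h : g ∈ PolF V, I ⟨g, h⟩ = m

variable {I : PolF V →+ ℤ}

theorem EVal.unique {g : V → ℤ} {m m' : ℤ} (h : EVal I g m) (h' : EVal I g m') : m = m' := by
  obtain ⟨hm, hv⟩ := h; obtain ⟨hm', hv'⟩ := h'
  rw [← hv, ← hv']

theorem EVal_zero : EVal I 0 0 := ⟨(PolF V).zero_mem, by rw [show (⟨0, _⟩ : PolF V) = 0 from rfl, map_zero]⟩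

theorem ind_empty : ind (∅ : Set V) = 0 := by
  funext x; simp [ind]

theorem EVal_ind_empty : EVal I (ind (∅ : Set V)) 0 := by
  rw [ind_empty]; exact EVal_zero

theorem EVal.add {g g' : V → ℤ} {m m' : ℤ} (h : EVal I g m) (h' : EVal I g' m') :
    EVal I (g + g') (m + m') := by
  obtain ⟨hm, hv⟩ := h; obtain ⟨hm', hv'⟩ := h'
  refine ⟨(PolF V).add_mem hm hm', ?_⟩
  have : (⟨g + g', (PolF V).add_mem hm hm'⟩ : PolF V) = ⟨g, hm⟩ + ⟨g', hm'⟩ := rfl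
  rw [this, map_add, hv, hv']

theorem EVal_congr {g g' : V → ℤ} {m : ℤ} (h : EVal I g m) (hgg : g = g') : EVal I g' m := hgg ▸ h

theorem EVal_cell (hI : IsEulerHom I) {C : Set V} (hC : IsPolyhedralCell C) :
    EVal I (ind C) ((-1) ^ cellDim C) := ⟨ind_mem_PolF hC, hI C hC⟩

theorem EVal_sum {ι : Type*} (s : Finset ι) (g : ι → V → ℤ) (m : ι → ℤ)
    (h : ∀ i ∈ s, EVal I (g i) (m i)) :
    EVal I (∑ i ∈ s, g i) (∑ i ∈ s, m i) := by
  classical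
  induction s using Finset.induction_on with
  | empty => simpa using EVal_zero
  | insert a s hni ih =>
    rw [Finset.sum_insert hni, Finset.sum_insert hni]
    exact (h a (Finset.mem_insert_self a s)).add (ih fun i hi => h i (Finset.mem_insert_of_mem hi))

/-- indicator of a finite disjoint union. -/
theorem ind_partition {ι : Type*} (s : Finset ι) (C : ι → Set V) (S : Set V)
    (hsub : ∀ i ∈ s, C i ⊆ S)
    (hcov : ∀ x ∈ S, ∃ i ∈ s, x ∈ C i)
    (hdisj : ∀ i ∈ s, ∀ j ∈ s, i ≠ j → ∀ x, x ∈ C i → x ∉ C j) :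
    ind S = ∑ i ∈ s, ind (C i) := by
  classical
  funext x
  have : (∑ i ∈ s, ind (C i)) x = ∑ i ∈ s, ind (C i) x := by
    simp [Finset.sum_apply]
  rw [this]
  by_cases hx : x ∈ S
  · obtain ⟨i₀, hi₀, hxi₀⟩ := hcov x hx
    rw [show ind S x = 1 by simp [ind, hx]]
    rw [Finset.sum_eq_single_of_mem i₀ hi₀]
    · simp [ind, hxi₀]
    · intro j hj hji
      simp only [ind, ite_eq_right_iff]
      intro hxj
      exact absurd hxi₀ (hdisj j hj i₀ hi₀ hji x hxj)
  · rw [show ind S x = 0 by simp [ind, hx]]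
    refine (Finset.sum_eq_zero fun i hi => ?_).symm
    simp only [ind, ite_eq_right_iff]
    intro hxi
    exact absurd (hsub i hi hxi) hx

/-- The affine subspace cut out by a set of affine functionals. -/
def affZeros (G : Set (V →ᵃ[ℝ] ℝ)) : AffineSubspace ℝ V where
  carrier := {x | ∀ g ∈ G, g x = 0}
  smul_vsub_vadd_mem' := by
    intro c p₁ p₂ p₃ h₁ h₂ h₃ g hg
    have : g (c • (p₁ -ᵥ p₂) +ᵥ p₃) = c • (g p₁ -ᵥ g p₂) +ᵥ g p₃ := by
      rw [AffineMap.map_vadd, ← AffineMap.linearMap_vsub, map_smul]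
    simp only [this, h₁ g hg, h₂ g hg, h₃ g hg]
    simp

theorem mem_affZeros {G : Set (V →ᵃ[ℝ] ℝ)} {x : V} :
    x ∈ affZeros G ↔ ∀ g ∈ G, g x = 0 := Iff.rfl

theorem affine_continuous (g : V →ᵃ[ℝ] ℝ) : Continuous g := by
  have h : ⇑g = fun x => g.linear x + g 0 := by
    funext x
    have := g.map_vadd 0 x
    simpa [vadd_eq_add] using this
  rw [h]
  exact (g.linear.continuous_of_finiteDimensional).add continuous_const

/-- the affine span of the intersection of an affine subspace with an open set. -/
theorem affineSpan_inter_open (A : AffineSubspace ℝ V) (O : Set V) (hO : IsOpen O)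
    (hne : ((A : Set V) ∩ O).Nonempty) :
    affineSpan ℝ ((A : Set V) ∩ O) = A := by
  obtain ⟨u, huA, huO⟩ := hne
  refine le_antisymm (affineSpan_le.2 inter_subset_left) fun a ha => ?_
  -- find small t > 0 with u + t • (a - u) ∈ O
  have hcont : Continuous fun t : ℝ => t • (a -ᵥ u) +ᵥ u :=
    by fun_prop
  have htend : Filter.Tendsto (fun t : ℝ => t • (a -ᵥ u) +ᵥ u) (nhds 0) (nhds u) := by
    simpa using hcont.tendsto 0
  have hev : ∀ᶠ t in nhds (0:ℝ), (t • (a -ᵥ u) +ᵥ u) ∈ O := htend.eventually (hO.mem_nhds huO)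
  have hev' : ∀ᶠ t in nhdsWithin (0:ℝ) (Set.Ioi 0), (t • (a -ᵥ u) +ᵥ u) ∈ O :=
    hev.filter_mono nhdsWithin_le_nhds
  obtain ⟨t, htO, ht0⟩ := (hev'.and (eventually_mem_nhdsWithin)).exists
  have ht0' : (0:ℝ) < t := ht0
  -- the point y := t • (a -ᵥ u) +ᵥ u is in A ∩ O
  have hyA : (t • (a -ᵥ u) +ᵥ u) ∈ A := A.smul_vsub_vadd_mem t ha huA huA
  have hy : (t • (a -ᵥ u) +ᵥ u) ∈ affineSpan ℝ ((A : Set V) ∩ O) :=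
    subset_affineSpan ℝ _ ⟨hyA, htO⟩
  have hu : u ∈ affineSpan ℝ ((A : Set V) ∩ O) := subset_affineSpan ℝ _ ⟨huA, huO⟩
  have : a = t⁻¹ • ((t • (a -ᵥ u) +ᵥ u) -ᵥ u) +ᵥ u := by
    rw [vadd_vsub, smul_smul, inv_mul_cancel₀ (ne_of_gt ht0'), one_smul, vsub_vadd]
  rw [this]
  exact (affineSpan ℝ _).smul_vsub_vadd_mem _ hy hu hu

theorem finrank_inf_ker {W : Submodule ℝ V} {φ : V →ₗ[ℝ] ℝ} {w : V}
    (hw : w ∈ W) (hφw : φ w ≠ 0) :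
    Module.finrank ℝ ((W ⊓ LinearMap.ker φ : Submodule ℝ V)) + 1 = Module.finrank ℝ W := by
  classical
  set φ' : W →ₗ[ℝ] ℝ := φ.comp W.subtype with hφ'
  have hker : LinearMap.ker φ' = (W ⊓ LinearMap.ker φ).comap W.subtype := by
    ext x
    simp [hφ', Submodule.mem_comap, LinearMap.mem_ker, x.2]
  have hrange : LinearMap.range φ' = ⊤ := by
    refine Submodule.eq_top_iff'.2 fun c => ?_
    refine ⟨(c / φ w) • ⟨w, hw⟩, ?_⟩
    simp [hφ', div_mul_cancel₀, hφw]
  have h1 : Module.finrank ℝ (LinearMap.range φ') + Module.finrank ℝ (LinearMap.ker φ') =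
      Module.finrank ℝ W := LinearMap.finrank_range_add_finrank_ker φ'
  have h2 : Module.finrank ℝ (LinearMap.range φ') = 1 := by
    rw [hrange]; simpa using Module.finrank_self ℝ
  have h3 : Module.finrank ℝ (LinearMap.ker φ') =
      Module.finrank ℝ ((W ⊓ LinearMap.ker φ : Submodule ℝ V)) := by
    rw [hker]
    exact (Submodule.comapSubtypeEquivOfLe inf_le_left).finrank_eq
  omega

/-- helper: a cell presented by finite-type-indexed families. -/
theorem isCell_of_families {ιE ιS : Type} [Fintype ιE] [Fintype ιS]
    (F : ιE → (V →ᵃ[ℝ] ℝ)) (G : ιS → (V →ᵃ[ℝ] ℝ))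
    (hne : ({x : V | (∀ e, F e x = 0) ∧ ∀ s, 0 < G s x}).Nonempty) :
    IsPolyhedralCell {x : V | (∀ e, F e x = 0) ∧ ∀ s, 0 < G s x} := by
  refine ⟨hne, Fintype.card ιE, Fintype.card ιS,
    F ∘ (Fintype.equivFin ιE).symm, G ∘ (Fintype.equivFin ιS).symm, ?_⟩
  ext x
  simp only [Set.mem_setOf_eq, Function.comp_apply]
  constructor
  · rintro ⟨h1, h2⟩
    exact ⟨fun i => h1 _, fun j => h2 _⟩
  · rintro ⟨h1, h2⟩
    refine ⟨fun e => ?_, fun s => ?_⟩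
    · simpa using h1 (Fintype.equivFin ιE e)
    · simpa using h2 (Fintype.equivFin ιS s)

section Family

variable {ι : Type} [Fintype ι] (f : ι → (V →ᵃ[ℝ] ℝ))

def Qset : Set V := {x | ∀ i, 0 ≤ f i x}
def Rset : Set V := {v | ∀ i, 0 ≤ (f i).linear v}
def zcell (Z : Finset ι) : Set V := {x | (∀ i ∈ Z, f i x = 0) ∧ ∀ i ∉ Z, 0 < f i x}

variable {f}

theorem zcell_subset {Z : Finset ι} : zcell f Z ⊆ Qset f := by
  rintro x ⟨h1, h2⟩ i
  by_cases hi : i ∈ Z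
  · exact le_of_eq (h1 i hi).symm
  · exact le_of_lt (h2 i hi)

theorem affine_comb (g : V →ᵃ[ℝ] ℝ) {a b : ℝ} (hab : a + b = 1) (x y : V) :
    g (a • x + b • y) = a * g x + b * g y := by
  have hxy : a • x + b • y = b • (y -ᵥ x) +ᵥ x := by
    rw [vsub_eq_sub, vadd_eq_add, smul_sub]
    rw [show a = 1 - b from by linarith, sub_smul, one_smul]; abel
  rw [hxy, AffineMap.map_vadd, map_smul, AffineMap.linearMap_vsub]
  simp only [vsub_eq_sub, vadd_eq_add, smul_eq_mul]
  rw [show a = 1 - b from by linarith]; ring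

def patternZ (f : ι → (V →ᵃ[ℝ] ℝ)) (x : V) : Finset ι := Finset.univ.filter fun i => f i x = 0

theorem mem_zcell_pattern {x : V} (hx : x ∈ Qset f) : x ∈ zcell f (patternZ f x) := by
  constructor
  · intro i hi
    simpa [patternZ] using hi
  · intro i hi
    have h0 : f i x ≠ 0 := by simpa [patternZ] using hi
    exact lt_of_le_of_ne (hx i) (Ne.symm h0)

theorem pattern_unique {x : V} {Z : Finset ι} (hx : x ∈ zcell f Z) : Z = patternZ f x := by
  ext i
  simp only [patternZ, Finset.mem_filter, Finset.mem_univ, true_and]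
  constructor
  · intro hi; exact hx.1 i hi
  · intro h0
    by_contra hi
    exact absurd h0 (ne_of_gt (hx.2 i hi))

theorem zcell_disjoint' {Z Z' : Finset ι} (h : Z ≠ Z') {x : V}
    (hx : x ∈ zcell f Z) : x ∉ zcell f Z' := fun hx' =>
  h ((pattern_unique hx).trans (pattern_unique hx').symm)

theorem Qset_convex : Convex ℝ (Qset f) := by
  intro x hx y hy a b ha hb hab
  intro i
  rw [affine_comb (f i) hab]
  have := hx i; have := hy i
  positivity

theorem zcell_convex {Z : Finset ι} : Convex ℝ (zcell f Z) := by
  intro x hx y hy a b ha hb hab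
  have key : ∀ g : V →ᵃ[ℝ] ℝ, g (a • x + b • y) = a * g x + b * g y :=
    fun g => affine_comb g hab x y
  constructor
  · intro i hi
    rw [key]
    rw [hx.1 i hi, hy.1 i hi]; ring
  · intro i hi
    rw [key]
    rcases eq_or_lt_of_le ha with ha0 | ha0
    · rw [← ha0] at hab ⊢
      simp only [zero_mul, zero_add] at *
      rw [show b = 1 by linarith]
      simpa using hy.2 i hi
    · have := hy.2 i hi
      have := hx.2 i hi
      have : 0 < a * f i x := by positivity
      nlinarith [mul_nonneg hb (le_of_lt (hy.2 i hi))]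

theorem Qset_recession {x v : V} (hx : x ∈ Qset f) (hv : v ∈ Rset f) {t : ℝ} (ht : 0 ≤ t) :
    x + t • v ∈ Qset f := by
  intro i
  have : f i (x + t • v) = (f i).linear (t • v) + f i x := by
    have := (f i).map_vadd x (t • v)
    simpa [vadd_eq_add, add_comm] using this
  rw [this, map_smul]
  have := hv i
  have := hx i
  have : 0 ≤ t * (f i).linear v := mul_nonneg ht (hv i)
  simp only [smul_eq_mul]
  linarith [hx i]

theorem Rset_smul {v : V} (hv : v ∈ Rset f) {t : ℝ} (ht : 0 ≤ t) : t • v ∈ Rset f := by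
  intro i; rw [map_smul]; exact mul_nonneg ht (hv i)

theorem Rset_add {v w : V} (hv : v ∈ Rset f) (hw : w ∈ Rset f) : v + w ∈ Rset f := by
  intro i; rw [map_add]; exact add_nonneg (hv i) (hw i)

theorem Qset_closed : IsClosed (Qset f) := by
  have : Qset f = ⋂ i, (f i) ⁻¹' (Set.Ici 0) := by
    ext x; simp [Qset, Set.mem_iInter]
  rw [this]
  refine isClosed_iInter fun i => IsClosed.preimage ?_ isClosed_Ici
  have h : ⇑(f i) = fun x => (f i).linear x + f i 0 := by
    funext x
    have := (f i).map_vadd 0 x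
    simpa [vadd_eq_add] using this
  rw [h]
  exact ((f i).linear.continuous_of_finiteDimensional).add continuous_const

end Family

section Cells

variable {ι : Type} [Fintype ι] {f : ι → (V →ᵃ[ℝ] ℝ)} (γ : V →ᵃ[ℝ] ℝ)

def Ocell (f : ι → (V →ᵃ[ℝ] ℝ)) (Z : Finset ι) : Set V := {x | ∀ i ∉ Z, 0 < f i x}

def AZ (f : ι → (V →ᵃ[ℝ] ℝ)) (Z : Finset ι) : AffineSubspace ℝ V :=
  affZeros {g | ∃ i ∈ Z, g = f i}

theorem Ocell_open {Z : Finset ι} : IsOpen (Ocell f Z) := by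
  have : Ocell f Z = ⋂ (i : ι) (_ : i ∉ Z), (f i) ⁻¹' (Set.Ioi 0) := by
    ext x; simp [Ocell, Set.mem_iInter]
  rw [this]
  exact isOpen_iInter_of_finite fun i =>
    isOpen_iInter_of_finite fun hi => (IsOpen.preimage (affine_continuous (f i)) isOpen_Ioi)

theorem zcell_eq {Z : Finset ι} : zcell f Z = (AZ f Z : Set V) ∩ Ocell f Z := by
  ext x
  simp only [zcell, AZ, Ocell, Set.mem_inter_iff, Set.mem_setOf_eq]
  constructor
  · rintro ⟨h1, h2⟩
    refine ⟨?_, h2⟩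
    rintro g ⟨i, hi, rfl⟩
    exact h1 i hi
  · rintro ⟨h1, h2⟩
    exact ⟨fun i hi => h1 (f i) ⟨i, hi, rfl⟩, h2⟩

theorem span_zcell {Z : Finset ι} (hne : (zcell f Z).Nonempty) :
    affineSpan ℝ (zcell f Z) = AZ f Z := by
  rw [zcell_eq]
  exact affineSpan_inter_open _ _ Ocell_open (by rwa [← zcell_eq])

theorem dim_zcell {Z : Finset ι} (hne : (zcell f Z).Nonempty) :
    cellDim (zcell f Z) = Module.finrank ℝ (AZ f Z).direction := by
  rw [cellDim, span_zcell hne]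

theorem cell_zcell {Z : Finset ι} (hne : (zcell f Z).Nonempty) :
    IsPolyhedralCell (zcell f Z) := by
  have heq : zcell f Z = {x : V | (∀ e : {i // i ∈ Z}, f e.1 x = 0) ∧
      ∀ s : {i // i ∉ Z}, 0 < f s.1 x} := by
    ext x
    simp only [zcell, Set.mem_setOf_eq, Subtype.forall]
  rw [heq]
  exact isCell_of_families _ _ (by rw [← heq]; exact hne)

theorem dim_window {Z : Finset ι} {J : Set ℝ} (hJ : IsOpen J)
    (hne : (zcell f Z ∩ γ ⁻¹' J).Nonempty) :
    cellDim (zcell f Z ∩ γ ⁻¹' J) = cellDim (zcell f Z) := by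
  have h1 : zcell f Z ∩ γ ⁻¹' J = (AZ f Z : Set V) ∩ (Ocell f Z ∩ γ ⁻¹' J) := by
    rw [zcell_eq]; ext x; simp [and_assoc]
  have hne' : (zcell f Z).Nonempty := hne.mono inter_subset_left
  rw [cellDim, cellDim, h1, affineSpan_inter_open _ _
    (Ocell_open.inter ((affine_continuous γ).isOpen_preimage J hJ)) (by rw [← h1]; exact hne),
    span_zcell hne']

theorem cell_window_Ioo {Z : Finset ι} {c₁ c₂ : ℝ}
    (hne : (zcell f Z ∩ γ ⁻¹' (Set.Ioo c₁ c₂)).Nonempty) :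
    IsPolyhedralCell (zcell f Z ∩ γ ⁻¹' (Set.Ioo c₁ c₂)) := by
  have heq : zcell f Z ∩ γ ⁻¹' (Set.Ioo c₁ c₂) =
      {x : V | (∀ e : {i // i ∈ Z}, f e.1 x = 0) ∧
        ∀ s : ({i // i ∉ Z}) ⊕ Bool, 0 <
          (Sum.elim (fun i : {i // i ∉ Z} => f i.1)
            (fun b => if b then γ - AffineMap.const ℝ V c₁ else AffineMap.const ℝ V c₂ - γ) s) x} := by
    ext x
    simp only [zcell, Set.mem_inter_iff, Set.mem_setOf_eq, Set.mem_preimage, Set.mem_Ioo,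
      Subtype.forall, Sum.forall, Bool.forall_bool]
    constructor
    · rintro ⟨⟨h1, h2⟩, hγ1, hγ2⟩
      refine ⟨h1, h2, ?_, ?_⟩ <;>
        simp [AffineMap.coe_sub, AffineMap.coe_const, sub_pos, hγ1, hγ2]
    · rintro ⟨h1, h2, hb1, hb2⟩
      norm_num [AffineMap.coe_sub, AffineMap.coe_const, sub_pos] at hb1 hb2
      exact ⟨⟨h1, h2⟩, hb2, hb1⟩
  rw [heq]
  exact isCell_of_families _ _ (by rw [← heq]; exact hne)

theorem cell_window_Ioi {Z : Finset ι} {c₁ : ℝ}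
    (hne : (zcell f Z ∩ γ ⁻¹' (Set.Ioi c₁)).Nonempty) :
    IsPolyhedralCell (zcell f Z ∩ γ ⁻¹' (Set.Ioi c₁)) := by
  have heq : zcell f Z ∩ γ ⁻¹' (Set.Ioi c₁) =
      {x : V | (∀ e : {i // i ∈ Z}, f e.1 x = 0) ∧
        ∀ s : ({i // i ∉ Z}) ⊕ Unit, 0 <
          (Sum.elim (fun i : {i // i ∉ Z} => f i.1)
            (fun _ => γ - AffineMap.const ℝ V c₁) s) x} := by
    ext x
    simp only [zcell, Set.mem_inter_iff, Set.mem_setOf_eq, Set.mem_preimage, Set.mem_Ioi,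
      Subtype.forall, Sum.forall]
    constructor
    · rintro ⟨⟨h1, h2⟩, hγ1⟩
      refine ⟨h1, h2, ?_⟩
      intro u
      simp [AffineMap.coe_sub, AffineMap.coe_const, sub_pos, hγ1]
    · rintro ⟨h1, h2, hb1⟩
      have := hb1 ()
      simp only [Sum.elim_inr, AffineMap.coe_sub, AffineMap.coe_const, Pi.sub_apply,
        Function.const_apply, sub_pos] at this
      exact ⟨⟨h1, h2⟩, this⟩
  rw [heq]
  exact isCell_of_families _ _ (by rw [← heq]; exact hne)

def AZc (f : ι → (V →ᵃ[ℝ] ℝ)) (γ : V →ᵃ[ℝ] ℝ) (Z : Finset ι) (c : ℝ) : AffineSubspace ℝ V :=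
  affZeros ({g | ∃ i ∈ Z, g = f i} ∪ {γ - AffineMap.const ℝ V c})

theorem slice_eq {Z : Finset ι} {c : ℝ} :
    zcell f Z ∩ γ ⁻¹' {c} = (AZc f γ Z c : Set V) ∩ Ocell f Z := by
  ext x
  simp only [zcell, AZc, Ocell, Set.mem_inter_iff, Set.mem_setOf_eq, Set.mem_preimage,
    Set.mem_singleton_iff]
  constructor
  · rintro ⟨⟨h1, h2⟩, hγ⟩
    refine ⟨?_, h2⟩
    rintro g (⟨i, hi, rfl⟩ | rfl)
    · exact h1 i hi
    · simp [AffineMap.coe_sub, AffineMap.coe_const, hγ]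
  · rintro ⟨h1, h2⟩
    refine ⟨⟨fun i hi => h1 (f i) (Or.inl ⟨i, hi, rfl⟩), h2⟩, ?_⟩
    have := h1 (γ - AffineMap.const ℝ V c) (Or.inr rfl)
    simp only [AffineMap.coe_sub, AffineMap.coe_const, Pi.sub_apply, Function.const_apply,
      sub_eq_zero] at this
    exact this

theorem mem_direction_iff' {A : AffineSubspace ℝ V} {u : V} (hu : u ∈ A) (v : V) :
    v ∈ A.direction ↔ v +ᵥ u ∈ A := by
  constructor
  · intro hv; exact AffineSubspace.vadd_mem_of_mem_direction hv hu
  · intro hv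
    have := AffineSubspace.vsub_mem_direction hv hu
    simpa using this

theorem dir_AZc {Z : Finset ι} {c : ℝ} {u : V} (hu : u ∈ zcell f Z ∩ γ ⁻¹' {c}) :
    (AZc f γ Z c).direction = (AZ f Z).direction ⊓ LinearMap.ker γ.linear := by
  have huA : u ∈ AZc f γ Z c := by
    have := hu; rw [slice_eq] at this; exact this.1
  have huAZ : u ∈ AZ f Z := by
    have h1 := hu.1; rw [zcell_eq] at h1; exact h1.1
  have huγ : γ u = c := hu.2
  ext v
  rw [mem_direction_iff' huA v, Submodule.mem_inf, mem_direction_iff' huAZ v]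
  have hγv : γ (v +ᵥ u) = γ.linear v + c := by
    rw [AffineMap.map_vadd, huγ]; simp [vadd_eq_add]
  constructor
  · intro hv
    constructor
    · intro g hg
      exact hv g (Or.inl hg)
    · have := hv (γ - AffineMap.const ℝ V c) (Or.inr rfl)
      simp only [AffineMap.coe_sub, AffineMap.coe_const, Pi.sub_apply, Function.const_apply,
        sub_eq_zero] at this
      rw [LinearMap.mem_ker]
      rw [hγv] at this
      linarith
  · rintro ⟨h1, h2⟩
    rintro g (hg | rfl)
    · exact h1 g hg
    · simp only [AffineMap.coe_sub, AffineMap.coe_const, Pi.sub_apply, Function.const_apply,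
        sub_eq_zero]
      rw [hγv, LinearMap.mem_ker.1 h2, zero_add]

theorem span_slice {Z : Finset ι} {c : ℝ} (hne : (zcell f Z ∩ γ ⁻¹' {c}).Nonempty) :
    affineSpan ℝ (zcell f Z ∩ γ ⁻¹' {c}) = AZc f γ Z c := by
  rw [slice_eq]
  exact affineSpan_inter_open _ _ Ocell_open (by rw [← slice_eq]; exact hne)

theorem dim_slice {Z : Finset ι} {c : ℝ} (hne : (zcell f Z ∩ γ ⁻¹' {c}).Nonempty)
    {d₁ d₂ : V} (hd₁ : d₁ ∈ zcell f Z) (hd₂ : d₂ ∈ zcell f Z) (hγd : γ d₁ ≠ γ d₂) :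
    cellDim (zcell f Z ∩ γ ⁻¹' {c}) + 1 = cellDim (zcell f Z) := by
  obtain ⟨u, hu⟩ := hne
  have hzne : (zcell f Z).Nonempty := ⟨d₁, hd₁⟩
  rw [cellDim, cellDim, span_slice γ ⟨u, hu⟩, span_zcell hzne, dir_AZc γ hu]
  have hd₁A : d₁ ∈ AZ f Z := by rw [zcell_eq] at hd₁; exact hd₁.1
  have hd₂A : d₂ ∈ AZ f Z := by rw [zcell_eq] at hd₂; exact hd₂.1
  have hw : (d₁ -ᵥ d₂ : V) ∈ (AZ f Z).direction :=
    AffineSubspace.vsub_mem_direction hd₁A hd₂A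
  have hγw : γ.linear (d₁ -ᵥ d₂) ≠ 0 := by
    rw [AffineMap.linearMap_vsub]
    simpa [vsub_eq_sub, sub_eq_zero] using hγd
  exact finrank_inf_ker hw hγw

theorem cell_slice {Z : Finset ι} {c : ℝ} (hne : (zcell f Z ∩ γ ⁻¹' {c}).Nonempty) :
    IsPolyhedralCell (zcell f Z ∩ γ ⁻¹' {c}) := by
  have heq : zcell f Z ∩ γ ⁻¹' {c} =
      {x : V | (∀ e : ({i // i ∈ Z}) ⊕ Unit,
          (Sum.elim (fun i : {i // i ∈ Z} => f i.1) (fun _ => γ - AffineMap.const ℝ V c) e) x = 0) ∧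
        ∀ s : {i // i ∉ Z}, 0 < f s.1 x} := by
    ext x
    simp only [zcell, Set.mem_inter_iff, Set.mem_setOf_eq, Set.mem_preimage,
      Set.mem_singleton_iff, Subtype.forall, Sum.forall]
    constructor
    · rintro ⟨⟨h1, h2⟩, hγ⟩
      refine ⟨⟨h1, fun u => ?_⟩, h2⟩
      simp [AffineMap.coe_sub, AffineMap.coe_const, sub_eq_zero, hγ]
    · rintro ⟨⟨h1, hb⟩, h2⟩
      have := hb ()
      simp only [Sum.elim_inr, AffineMap.coe_sub, AffineMap.coe_const, Pi.sub_apply,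
        Function.const_apply, sub_eq_zero] at this
      exact ⟨⟨h1, h2⟩, this⟩
  rw [heq]
  exact isCell_of_families _ _ (by rw [← heq]; exact hne)

end Cells

section Sweep

variable {ι : Type} [Fintype ι] {f : ι → (V →ᵃ[ℝ] ℝ)} (γ : V →ᵃ[ℝ] ℝ)

/-- the finite set of critical values of `γ` on the cells of `f`. -/
def Tcrit (f : ι → (V →ᵃ[ℝ] ℝ)) (γ : V →ᵃ[ℝ] ℝ) : Finset ℝ :=
  (Finset.univ.filter fun Z : Finset ι => (zcell f Z).Nonempty).biUnion
    fun Z => {sInf (γ '' zcell f Z), sSup (γ '' zcell f Z)}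

theorem sInf_mem_Tcrit {Z : Finset ι} (hne : (zcell f Z).Nonempty) :
    sInf (γ '' zcell f Z) ∈ Tcrit f γ :=
  Finset.mem_biUnion.2 ⟨Z, Finset.mem_filter.2 ⟨Finset.mem_univ _, hne⟩, by simp⟩

theorem sSup_mem_Tcrit {Z : Finset ι} (hne : (zcell f Z).Nonempty) :
    sSup (γ '' zcell f Z) ∈ Tcrit f γ :=
  Finset.mem_biUnion.2 ⟨Z, Finset.mem_filter.2 ⟨Finset.mem_univ _, hne⟩, by simp⟩

theorem image_ordConn {Z : Finset ι} : (γ '' zcell f Z).OrdConnected :=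
  (Convex.affine_image γ zcell_convex).ordConnected

/-- If an order-connected window avoids all critical values and meets the `γ`-image of a
cell, then the window is contained in that image. -/
theorem window_sub_image {W : Set ℝ} (hWo : W.OrdConnected)
    (hWT : ∀ r ∈ W, r ∉ Tcrit f γ) {Z : Finset ι} {y : ℝ}
    (hyim : y ∈ γ '' zcell f Z) (hyW : y ∈ W) : W ⊆ γ '' zcell f Z := by
  intro w hw
  by_contra hwim
  have hZne : (zcell f Z).Nonempty := by
    obtain ⟨d, hd, -⟩ := hyim; exact ⟨d, hd⟩
  rcases lt_trichotomy w y with hlt | heq | hgt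
  · have hub : ∀ z ∈ γ '' zcell f Z, w < z := by
      intro z hz
      by_contra hzw
      push_neg at hzw
      exact hwim ((image_ordConn γ).out hz hyim ⟨hzw, le_of_lt hlt⟩)
    have hbdd : BddBelow (γ '' zcell f Z) := ⟨w, fun z hz => (hub z hz).le⟩
    have h1 : w ≤ sInf (γ '' zcell f Z) := le_csInf ⟨y, hyim⟩ fun z hz => (hub z hz).le
    have h2 : sInf (γ '' zcell f Z) ≤ y := csInf_le hbdd hyim
    exact hWT _ (hWo.out hw hyW ⟨h1, h2⟩) (sInf_mem_Tcrit γ hZne)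
  · exact hwim (heq ▸ hyim)
  · have hub : ∀ z ∈ γ '' zcell f Z, z < w := by
      intro z hz
      by_contra hzw
      push_neg at hzw
      exact hwim ((image_ordConn γ).out hyim hz ⟨le_of_lt hgt, hzw⟩)
    have hbdd : BddAbove (γ '' zcell f Z) := ⟨w, fun z hz => (hub z hz).le⟩
    have h1 : sSup (γ '' zcell f Z) ≤ w := csSup_le ⟨y, hyim⟩ fun z hz => (hub z hz).le
    have h2 : y ≤ sSup (γ '' zcell f Z) := le_csSup hbdd hyim
    exact hWT _ (hWo.out hyW hw ⟨h2, h1⟩) (sSup_mem_Tcrit γ hZne)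

variable {I : PolF V →+ ℤ}

theorem slab_slice (hI : IsEulerHom I) {W : Set ℝ} (hWo : W.OrdConnected) (hWopen : IsOpen W)
    (hWT : ∀ r ∈ W, r ∉ Tcrit f γ)
    (hWcell : ∀ Z : Finset ι, (zcell f Z ∩ γ ⁻¹' W).Nonempty →
        IsPolyhedralCell (zcell f Z ∩ γ ⁻¹' W))
    {c' w₂ : ℝ} (hc' : c' ∈ W) (hw₂ : w₂ ∈ W) (hcw : c' ≠ w₂) :
    ∃ s : ℤ, EVal I (ind (Qset f ∩ γ ⁻¹' W)) s ∧
      EVal I (ind (Qset f ∩ γ ⁻¹' {c'})) (-s) := by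
  classical
  set rel : Finset (Finset ι) :=
    Finset.univ.filter (fun Z => (zcell f Z ∩ γ ⁻¹' W).Nonempty) with hrel
  have himg : ∀ Z ∈ rel, W ⊆ γ '' zcell f Z := by
    intro Z hZ
    rw [hrel, Finset.mem_filter] at hZ
    obtain ⟨x, hxz, hxJ⟩ := hZ.2
    exact window_sub_image γ hWo hWT (Set.mem_image_of_mem γ hxz) hxJ
  -- partition of the slab
  have hpart : ind (Qset f ∩ γ ⁻¹' W) = ∑ Z ∈ rel, ind (zcell f Z ∩ γ ⁻¹' W) := by
    apply ind_partition
    · intro Z _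
      exact Set.inter_subset_inter_left _ zcell_subset
    · rintro x ⟨hxQ, hxJ⟩
      refine ⟨patternZ f x, ?_, mem_zcell_pattern hxQ, hxJ⟩
      rw [hrel, Finset.mem_filter]
      exact ⟨Finset.mem_univ _, ⟨x, mem_zcell_pattern hxQ, hxJ⟩⟩
    · intro Z _ Z' _ hne x hx hx'
      exact zcell_disjoint' hne hx.1 hx'.1
  -- partition of the slice
  have hpart' : ind (Qset f ∩ γ ⁻¹' {c'}) = ∑ Z ∈ rel, ind (zcell f Z ∩ γ ⁻¹' {c'}) := by
    apply ind_partition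
    · intro Z _
      exact Set.inter_subset_inter_left _ zcell_subset
    · rintro x ⟨hxQ, hxJ⟩
      refine ⟨patternZ f x, ?_, mem_zcell_pattern hxQ, hxJ⟩
      rw [hrel, Finset.mem_filter]
      refine ⟨Finset.mem_univ _, ⟨x, mem_zcell_pattern hxQ, ?_⟩⟩
      have : γ x = c' := hxJ
      rw [Set.mem_preimage, this]
      exact hc'
    · intro Z _ Z' _ hne x hx hx'
      exact zcell_disjoint' hne hx.1 hx'.1
  refine ⟨∑ Z ∈ rel, (-1) ^ cellDim (zcell f Z), ?_, ?_⟩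
  · rw [hpart]
    apply EVal_sum
    intro Z hZ
    have hne : (zcell f Z ∩ γ ⁻¹' W).Nonempty := by
      rw [hrel, Finset.mem_filter] at hZ; exact hZ.2
    have := EVal_cell hI (hWcell Z hne)
    rwa [dim_window γ hWopen hne] at this
  · rw [hpart', ← Finset.sum_neg_distrib]
    apply EVal_sum
    intro Z hZ
    -- the slice of the cell is nonempty
    obtain ⟨d, hd, hγd⟩ : c' ∈ γ '' zcell f Z := himg Z hZ hc'
    have hne : (zcell f Z ∩ γ ⁻¹' {c'}).Nonempty := ⟨d, hd, by simpa using hγd⟩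
    -- two points of the cell with distinct γ values
    obtain ⟨d₂, hd₂, hγd₂⟩ : w₂ ∈ γ '' zcell f Z := himg Z hZ hw₂
    have hdd : γ d ≠ γ d₂ := by rw [hγd, hγd₂]; exact hcw
    have hdim := dim_slice γ hne hd hd₂ hdd
    have := EVal_cell hI (cell_slice γ hne)
    have hpow : ((-1 : ℤ)) ^ cellDim (zcell f Z ∩ γ ⁻¹' {c'}) =
        -(-1) ^ cellDim (zcell f Z) := by
      rw [← hdim, pow_succ]
      ring
    rwa [hpow] at this

end Sweep

section Claims

variable {ι : Type} [Fintype ι] {f : ι → (V →ᵃ[ℝ] ℝ)} (γ : V →ᵃ[ℝ] ℝ)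
variable {I : PolF V →+ ℤ}

theorem ind_union_disjoint {A B : Set V} (hd : ∀ x, x ∈ A → x ∉ B) :
    ind (A ∪ B) = ind A + ind B := by
  funext x
  by_cases hA : x ∈ A
  · have hB : x ∉ B := hd x hA
    simp [ind, hA, hB]
  · by_cases hB : x ∈ B <;> simp [ind, hA, hB]

theorem ind_Ioi_split (Q : Set V) (g : V → ℝ) {a b : ℝ} (hab : a < b) :
    ind (Q ∩ g ⁻¹' Set.Ioi a) =
      ind (Q ∩ g ⁻¹' Set.Ioo a b) + (ind (Q ∩ g ⁻¹' {b}) + ind (Q ∩ g ⁻¹' Set.Ioi b)) := by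
  funext x
  by_cases hQ : x ∈ Q
  · simp only [ind, Set.mem_inter_iff, hQ, true_and, Set.mem_preimage, Set.mem_Ioi,
      Set.mem_Ioo, Set.mem_singleton_iff, Pi.add_apply]
    rcases lt_trichotomy (g x) b with h | h | h
    · have h2 : ¬ g x = b := ne_of_lt h
      have h3 : ¬ b < g x := asymm h
      by_cases h1 : a < g x <;> simp [h1, h2, h3, h]
    · have h1 : a < g x := by rw [h]; exact hab
      simp [h, h1, lt_irrefl, hab]
    · have h1 : a < g x := hab.trans h
      have h2 : ¬ g x < b := asymm h
      have h3 : ¬ g x = b := ne_of_gt h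
      simp [h1, h2, h3, h]
  · simp [ind, hQ]

theorem Qimage_ordConn : (γ '' Qset f).OrdConnected :=
  (Convex.affine_image γ Qset_convex).ordConnected

theorem slice_nonempty_of_mem_image {y : ℝ} (hy : y ∈ γ '' Qset f) :
    (Qset f ∩ γ ⁻¹' {y}).Nonempty := by
  obtain ⟨x, hx, rfl⟩ := hy
  exact ⟨x, hx, rfl⟩

theorem Tcrit_le {m M : ℝ} (hbdd : ∀ x ∈ Qset f, γ x ≤ M) (hlow : ∀ x ∈ Qset f, m ≤ γ x) :
    ∀ r ∈ Tcrit f γ, r ≤ M := by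
  intro r hr
  rw [Tcrit, Finset.mem_biUnion] at hr
  obtain ⟨Z, hZ, hr⟩ := hr
  rw [Finset.mem_filter] at hZ
  obtain ⟨d, hd⟩ := hZ.2
  have hdQ : d ∈ Qset f := zcell_subset hd
  have him : γ d ∈ γ '' zcell f Z := Set.mem_image_of_mem γ hd
  have hub : ∀ z ∈ γ '' zcell f Z, z ≤ M := by
    rintro z ⟨w, hw, rfl⟩; exact hbdd w (zcell_subset hw)
  have hlb : ∀ z ∈ γ '' zcell f Z, m ≤ z := by
    rintro z ⟨w, hw, rfl⟩; exact hlow w (zcell_subset hw)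
  simp only [Finset.mem_insert, Finset.mem_singleton] at hr
  rcases hr with rfl | rfl
  · exact le_trans (csInf_le ⟨m, hlb⟩ him) (hub _ him)
  · exact csSup_le ⟨_, him⟩ hub

theorem Ioi_empty_of_no_crit {M : ℝ} (hbdd : ∀ x ∈ Qset f, γ x ≤ M) {c : ℝ}
    (hTc : ∀ r ∈ Tcrit f γ, ¬ c < r) : Qset f ∩ γ ⁻¹' Set.Ioi c = ∅ := by
  rw [Set.eq_empty_iff_forall_notMem]
  rintro x ⟨hxQ, hxc⟩
  have hxz := mem_zcell_pattern hxQ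
  have hZne : (zcell f (patternZ f x)).Nonempty := ⟨x, hxz⟩
  have him : γ x ∈ γ '' zcell f (patternZ f x) := Set.mem_image_of_mem γ hxz
  have hub : BddAbove (γ '' zcell f (patternZ f x)) := by
    refine ⟨M, ?_⟩
    rintro z ⟨w, hw, rfl⟩; exact hbdd w (zcell_subset hw)
  have h1 : γ x ≤ sSup (γ '' zcell f (patternZ f x)) := le_csSup hub him
  have h2 : c < sSup (γ '' zcell f (patternZ f x)) := lt_of_lt_of_le hxc h1
  exact hTc _ (sSup_mem_Tcrit γ hZne) h2

/-- CLAIM B: unbounded sweep. -/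
theorem claimB (hI : IsEulerHom I)
    (horacle : ∀ c', (Qset f ∩ γ ⁻¹' {c'}).Nonempty →
        EVal I (ind (Qset f ∩ γ ⁻¹' {c'})) 1) :
    ∀ N : ℕ, ∀ c : ℝ, ((Tcrit f γ).filter fun r => c < r).card ≤ N →
      (∀ c', c ≤ c' → (Qset f ∩ γ ⁻¹' {c'}).Nonempty) →
      EVal I (ind (Qset f ∩ γ ⁻¹' Set.Ioi c)) (-1) := by
  intro N
  induction N with
  | zero =>
    intro c hcard hup
    have hT' : ∀ r ∈ Set.Ioi c, r ∉ Tcrit f γ := by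
      intro r hr hrT
      have : r ∈ (Tcrit f γ).filter fun r => c < r := Finset.mem_filter.2 ⟨hrT, hr⟩
      have := Finset.card_pos.2 ⟨r, this⟩
      omega
    obtain ⟨s, hslab, hslice⟩ := slab_slice (f := f) γ hI Set.ordConnected_Ioi isOpen_Ioi hT'
      (fun Z hne => cell_window_Ioi γ hne) (Set.mem_Ioi.2 (by linarith : c < c + 1))
      (Set.mem_Ioi.2 (by linarith : c < c + 2)) (by norm_num)
    have h1 := horacle (c + 1) (hup (c + 1) (by linarith))
    have hs : -s = 1 := hslice.unique h1
    have hs' : s = -1 := by omega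
    rwa [hs'] at hslab
  | succ N ih =>
    intro c hcard hup
    by_cases hTc : ((Tcrit f γ).filter fun r => c < r).Nonempty
    case neg =>
      have hT' : ∀ r ∈ Set.Ioi c, r ∉ Tcrit f γ := by
        intro r hr hrT
        exact hTc ⟨r, Finset.mem_filter.2 ⟨hrT, hr⟩⟩
      obtain ⟨s, hslab, hslice⟩ := slab_slice (f := f) γ hI Set.ordConnected_Ioi isOpen_Ioi hT'
        (fun Z hne => cell_window_Ioi γ hne) (Set.mem_Ioi.2 (by linarith : c < c + 1))
        (Set.mem_Ioi.2 (by linarith : c < c + 2)) (by norm_num)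
      have h1 := horacle (c + 1) (hup (c + 1) (by linarith))
      have hs : -s = 1 := hslice.unique h1
      have hs' : s = -1 := by omega
      rwa [hs'] at hslab
    case pos =>
      set t := ((Tcrit f γ).filter fun r => c < r).min' hTc with ht
      have htT : t ∈ Tcrit f γ := (Finset.mem_filter.1 (Finset.min'_mem _ hTc)).1
      have hct : c < t := (Finset.mem_filter.1 (Finset.min'_mem _ hTc)).2
      have htmin : ∀ r ∈ Tcrit f γ, c < r → t ≤ r := fun r hr hcr =>
        Finset.min'_le _ _ (Finset.mem_filter.2 ⟨hr, hcr⟩)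
      -- choose c''
      set Tt := (Tcrit f γ).filter fun r => t < r with hTt
      have hc'' : ∃ c'' : ℝ, t < c'' ∧ c'' ∉ Tcrit f γ ∧
          (∀ r ∈ Tcrit f γ, ¬ (t < r ∧ r < c'')) := by
        by_cases h2 : Tt.Nonempty
        · refine ⟨(t + Tt.min' h2) / 2, ?_, ?_, ?_⟩
          · have := (Finset.mem_filter.1 (Finset.min'_mem _ h2)).2
            linarith
          · intro hmem
            have h3 : t < (t + Tt.min' h2) / 2 := by
              have := (Finset.mem_filter.1 (Finset.min'_mem _ h2)).2
              linarith
            have h4 : Tt.min' h2 ≤ (t + Tt.min' h2) / 2 :=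
              Finset.min'_le _ _ (Finset.mem_filter.2 ⟨hmem, h3⟩)
            have := (Finset.mem_filter.1 (Finset.min'_mem _ h2)).2
            linarith
          · rintro r hr ⟨h3, h4⟩
            have h5 : Tt.min' h2 ≤ r := Finset.min'_le _ _ (Finset.mem_filter.2 ⟨hr, h3⟩)
            linarith
        · refine ⟨t + 1, by linarith, ?_, ?_⟩
          · intro hmem
            exact h2 ⟨t + 1, Finset.mem_filter.2 ⟨hmem, by linarith⟩⟩
          · rintro r hr ⟨h3, _⟩
            exact h2 ⟨r, Finset.mem_filter.2 ⟨hr, h3⟩⟩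
      obtain ⟨c'', htc'', hc''T, hwin2⟩ := hc''
      -- window 1 : Ioo c t
      have hW1 : ∀ r ∈ Set.Ioo c t, r ∉ Tcrit f γ := by
        rintro r ⟨h1, h2⟩ hrT
        exact absurd (htmin r hrT h1) (not_le.2 h2)
      -- window 2 : Ioo t c''
      have hW2 : ∀ r ∈ Set.Ioo t c'', r ∉ Tcrit f γ := by
        rintro r ⟨h1, h2⟩ hrT
        exact hwin2 r hrT ⟨h1, h2⟩
      -- decompositions
      have hsplit1 := ind_Ioi_split (Qset f) (⇑γ) hct
      have hsplit2 := ind_Ioi_split (Qset f) (⇑γ) htc''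
      -- slab (c,t)
      obtain ⟨s₁, hslab₁, hslice₁⟩ := slab_slice (f := f) γ hI Set.ordConnected_Ioo isOpen_Ioo
        hW1 (fun Z hne => cell_window_Ioo γ hne)
        (show (c+t)/2 ∈ Set.Ioo c t by constructor <;> [linarith; linarith])
        (show (3*c+t)/4 ∈ Set.Ioo c t by constructor <;> [linarith; linarith])
        (by intro h; linarith [h])
      have hs₁ : s₁ = -1 := by
        have h1 := horacle ((c+t)/2) (hup _ (by linarith))
        have := hslice₁.unique h1
        omega
      rw [hs₁] at hslab₁
      -- slice at t
      have hslicet := horacle t (hup t hct.le)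
      -- slab (t, c'')
      obtain ⟨s₂, hslab₂, hslice₂⟩ := slab_slice (f := f) γ hI Set.ordConnected_Ioo isOpen_Ioo
        hW2 (fun Z hne => cell_window_Ioo γ hne)
        (show (t+c'')/2 ∈ Set.Ioo t c'' by constructor <;> [linarith; linarith])
        (show (3*t+c'')/4 ∈ Set.Ioo t c'' by constructor <;> [linarith; linarith])
        (by intro h; linarith [h])
      have hs₂ : s₂ = -1 := by
        have h1 := horacle ((t+c'')/2) (hup _ (by linarith))
        have := hslice₂.unique h1
        omega
      rw [hs₂] at hslab₂
      -- slice at c''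
      have hslicec'' := horacle c'' (hup c'' (by linarith))
      -- tail
      have hcard' : ((Tcrit f γ).filter fun r => c'' < r).card ≤ N := by
        have hsub : ((Tcrit f γ).filter fun r => c'' < r) ⊆
            ((Tcrit f γ).filter fun r => c < r).erase t := by
          intro r hr
          rw [Finset.mem_filter] at hr
          refine Finset.mem_erase.2 ⟨?_, Finset.mem_filter.2 ⟨hr.1, by linarith [hr.2]⟩⟩
          intro hrt
          rw [hrt] at hr
          linarith [hr.2]
        have h1 := Finset.card_le_card hsub
        have h2 : (((Tcrit f γ).filter fun r => c < r).erase t).card =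
            ((Tcrit f γ).filter fun r => c < r).card - 1 :=
          Finset.card_erase_of_mem (Finset.mem_filter.2 ⟨htT, hct⟩)
        have h3 : 1 ≤ ((Tcrit f γ).filter fun r => c < r).card :=
          Finset.card_pos.2 ⟨t, Finset.mem_filter.2 ⟨htT, hct⟩⟩
        omega
      have htail := ih c'' hcard' (fun c' hc' => hup c' (by linarith))
      -- assemble
      rw [hsplit1, hsplit2]
      have := hslab₁.add (hslicet.add (hslab₂.add (hslicec''.add htail)))
      norm_num at this
      convert this using 2 <;> norm_num

/-- CLAIM A: bounded sweep. -/
theorem claimA (hI : IsEulerHom I)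
    (horacle : ∀ c', (Qset f ∩ γ ⁻¹' {c'}).Nonempty →
        EVal I (ind (Qset f ∩ γ ⁻¹' {c'})) 1)
    {m M : ℝ} (hbdd : ∀ x ∈ Qset f, γ x ≤ M) (hlow : ∀ x ∈ Qset f, m ≤ γ x)
    (hMim : M ∈ γ '' Qset f) :
    ∀ N : ℕ, ∀ c : ℝ, ((Tcrit f γ).filter fun r => c < r).card ≤ N →
      c ∈ γ '' Qset f →
      EVal I (ind (Qset f ∩ γ ⁻¹' Set.Ioi c)) 0 := by
  intro N
  induction N with
  | zero =>
    intro c hcard hcim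
    have hT' : ∀ r ∈ Tcrit f γ, ¬ c < r := by
      intro r hrT hr
      have : r ∈ (Tcrit f γ).filter fun r => c < r := Finset.mem_filter.2 ⟨hrT, hr⟩
      have := Finset.card_pos.2 ⟨r, this⟩
      omega
    rw [Ioi_empty_of_no_crit γ hbdd hT']
    exact EVal_ind_empty
  | succ N ih =>
    intro c hcard hcim
    by_cases hTc : ((Tcrit f γ).filter fun r => c < r).Nonempty
    case neg =>
      have hT' : ∀ r ∈ Tcrit f γ, ¬ c < r := by
        intro r hrT hr
        exact hTc ⟨r, Finset.mem_filter.2 ⟨hrT, hr⟩⟩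
      rw [Ioi_empty_of_no_crit γ hbdd hT']
      exact EVal_ind_empty
    case pos =>
      set t := ((Tcrit f γ).filter fun r => c < r).min' hTc with ht
      have htT : t ∈ Tcrit f γ := (Finset.mem_filter.1 (Finset.min'_mem _ hTc)).1
      have hct : c < t := (Finset.mem_filter.1 (Finset.min'_mem _ hTc)).2
      have htmin : ∀ r ∈ Tcrit f γ, c < r → t ≤ r := fun r hr hcr =>
        Finset.min'_le _ _ (Finset.mem_filter.2 ⟨hr, hcr⟩)
      have htM : t ≤ M := Tcrit_le γ hbdd hlow t htT
      have hcM : c ≤ M := by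
        obtain ⟨x, hx, rfl⟩ := hcim
        exact hbdd x hx
      -- membership of values in the image interval [c, M]
      have hmem_im : ∀ y : ℝ, c ≤ y → y ≤ M → y ∈ γ '' Qset f := fun y h1 h2 =>
        (Qimage_ordConn γ).out hcim hMim ⟨h1, h2⟩
      have htim : t ∈ γ '' Qset f := hmem_im t hct.le htM
      -- window 1 : Ioo c t
      have hW1 : ∀ r ∈ Set.Ioo c t, r ∉ Tcrit f γ := by
        rintro r ⟨h1, h2⟩ hrT
        exact absurd (htmin r hrT h1) (not_le.2 h2)
      have hsplit1 := ind_Ioi_split (Qset f) (⇑γ) hct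
      obtain ⟨s₁, hslab₁, hslice₁⟩ := slab_slice (f := f) γ hI Set.ordConnected_Ioo isOpen_Ioo
        hW1 (fun Z hne => cell_window_Ioo γ hne)
        (show (c+t)/2 ∈ Set.Ioo c t by constructor <;> [linarith; linarith])
        (show (3*c+t)/4 ∈ Set.Ioo c t by constructor <;> [linarith; linarith])
        (by intro h; linarith [h])
      have hs₁ : s₁ = -1 := by
        have h1 := horacle ((c+t)/2)
          (slice_nonempty_of_mem_image γ (hmem_im _ (by linarith) (by linarith)))
        have := hslice₁.unique h1
        omega
      rw [hs₁] at hslab₁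
      have hslicet := horacle t (slice_nonempty_of_mem_image γ htim)
      by_cases h2 : ((Tcrit f γ).filter fun r => t < r).Nonempty
      case neg =>
        -- no criticals above t : the tail beyond t is empty
        have hT'' : ∀ r ∈ Tcrit f γ, ¬ t < r := by
          intro r hrT hr
          exact h2 ⟨r, Finset.mem_filter.2 ⟨hrT, hr⟩⟩
        have hUt : Qset f ∩ γ ⁻¹' Set.Ioi t = ∅ := Ioi_empty_of_no_crit γ hbdd hT''
        rw [hsplit1, hUt, ind_empty]
        have := hslab₁.add (hslicet.add (EVal_zero (I := I)))
        norm_num at this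
        convert this using 2 <;> norm_num
      case pos =>
        set t₂ := ((Tcrit f γ).filter fun r => t < r).min' h2 with ht₂
        have ht₂T : t₂ ∈ Tcrit f γ := (Finset.mem_filter.1 (Finset.min'_mem _ h2)).1
        have htt₂ : t < t₂ := (Finset.mem_filter.1 (Finset.min'_mem _ h2)).2
        have ht₂M : t₂ ≤ M := Tcrit_le γ hbdd hlow t₂ ht₂T
        set c'' := (t + t₂) / 2 with hc''def
        have htc'' : t < c'' := by rw [hc''def]; linarith
        have hc''t₂ : c'' < t₂ := by rw [hc''def]; linarith
        have hc''M : c'' ≤ M := by linarith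
        have hc''im : c'' ∈ γ '' Qset f := hmem_im c'' (by linarith) hc''M
        have hW2 : ∀ r ∈ Set.Ioo t c'', r ∉ Tcrit f γ := by
          rintro r ⟨hr1, hr2⟩ hrT
          have := Finset.min'_le _ _ (Finset.mem_filter.2 ⟨hrT, hr1⟩)
          rw [← ht₂] at this
          linarith
        have hsplit2 := ind_Ioi_split (Qset f) (⇑γ) htc''
        obtain ⟨s₂, hslab₂, hslice₂⟩ := slab_slice (f := f) γ hI Set.ordConnected_Ioo isOpen_Ioo
          hW2 (fun Z hne => cell_window_Ioo γ hne)
          (show (t+c'')/2 ∈ Set.Ioo t c'' by constructor <;> [linarith; linarith])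
          (show (3*t+c'')/4 ∈ Set.Ioo t c'' by constructor <;> [linarith; linarith])
          (by intro h; linarith [h])
        have hs₂ : s₂ = -1 := by
          have h1 := horacle ((t+c'')/2)
            (slice_nonempty_of_mem_image γ (hmem_im _ (by linarith) (by linarith)))
          have := hslice₂.unique h1
          omega
        rw [hs₂] at hslab₂
        have hslicec'' := horacle c'' (slice_nonempty_of_mem_image γ hc''im)
        have hcard' : ((Tcrit f γ).filter fun r => c'' < r).card ≤ N := by
          have hsub : ((Tcrit f γ).filter fun r => c'' < r) ⊆
              ((Tcrit f γ).filter fun r => c < r).erase t := by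
            intro r hr
            rw [Finset.mem_filter] at hr
            refine Finset.mem_erase.2 ⟨?_, Finset.mem_filter.2 ⟨hr.1, by linarith [hr.2]⟩⟩
            intro hrt
            rw [hrt] at hr
            linarith [hr.2]
          have h1 := Finset.card_le_card hsub
          have h2' : (((Tcrit f γ).filter fun r => c < r).erase t).card =
              ((Tcrit f γ).filter fun r => c < r).card - 1 :=
            Finset.card_erase_of_mem (Finset.mem_filter.2 ⟨htT, hct⟩)
          have h3' : 1 ≤ ((Tcrit f γ).filter fun r => c < r).card :=
            Finset.card_pos.2 ⟨t, Finset.mem_filter.2 ⟨htT, hct⟩⟩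
          omega
        have htail := ih c'' hcard' hc''im
        rw [hsplit1, hsplit2]
        have := hslab₁.add (hslicet.add (hslab₂.add (hslicec''.add htail)))
        norm_num at this
        convert this using 2 <;> norm_num

end Claims

section Compactness

variable {ι : Type} [Fintype ι] {f : ι → (V →ᵃ[ℝ] ℝ)}

theorem continuous_inf' {κ : Type*} (s : Finset κ) (hs : s.Nonempty) (g : κ → V → ℝ)
    (hg : ∀ i ∈ s, Continuous (g i)) :
    Continuous fun x => s.inf' hs fun i => g i x := by
  induction hs using Finset.Nonempty.cons_induction with
  | singleton i => simpa using hg i (by simp)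
  | cons i s his hs ih =>
    have h1 : (fun x => (Finset.cons i s his).inf' (Finset.cons_nonempty his)
        fun j => g j x) = fun x => min (g i x) (s.inf' hs fun j => g j x) := by
      funext x
      rw [Finset.inf'_cons hs]
    rw [h1]
    exact Continuous.min (hg i (Finset.mem_cons_self i s))
      (ih fun j hj => hg j (Finset.mem_cons_of_mem hj))

theorem Qset_compact (hR : Rset f ⊆ {0}) : IsCompact (Qset f) := by
  rcases subsingleton_or_nontrivial V with hV | hV
  · have : (Qset f).Subsingleton := fun x _ y _ => Subsingleton.elim x y
    exact this.isCompact
  · by_cases hι : Nonempty ι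
    swap
    · exfalso
      obtain ⟨v, hv⟩ := exists_ne (0 : V)
      have : v ∈ Rset f := fun i => absurd (hι ⟨i⟩) (by simp)
      exact hv (hR this)
    haveI := hι
    have huniv : (Finset.univ : Finset ι).Nonempty := Finset.univ_nonempty
    set F : V → ℝ := fun u => Finset.univ.inf' huniv fun i => (f i).linear u with hF
    have hFcont : Continuous F :=
      continuous_inf' _ huniv _ fun i _ => (f i).linear.continuous_of_finiteDimensional
    have hK : IsCompact (Metric.sphere (0 : V) 1) := isCompact_sphere 0 1
    have hKne : (Metric.sphere (0 : V) 1).Nonempty := by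
      obtain ⟨v, hv⟩ := exists_ne (0 : V)
      exact ⟨‖v‖⁻¹ • v, by simp [norm_smul, inv_mul_cancel₀ (norm_ne_zero_iff.2 hv)]⟩
    obtain ⟨u₀, hu₀K, hu₀max⟩ := hK.exists_isMaxOn hKne hFcont.continuousOn
    have hu₀neg : F u₀ < 0 := by
      have hu₀ne : u₀ ≠ 0 := by
        intro h
        have := hu₀K
        rw [h] at this
        simp at this
      have : u₀ ∉ Rset f := fun hmem => hu₀ne (hR hmem)
      obtain ⟨i, hi⟩ : ∃ i, (f i).linear u₀ < 0 := by
        by_contra h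
        push_neg at h
        exact this fun i => h i
      exact lt_of_le_of_lt (Finset.inf'_le _ (Finset.mem_univ i)) hi
    set δ : ℝ := -F u₀ with hδ
    have hδpos : 0 < δ := by rw [hδ]; linarith
    set C : ℝ := Finset.univ.sup' huniv fun i => f i 0 with hC
    have hbound : ∀ x ∈ Qset f, ‖x‖ ≤ C / δ := by
      intro x hx
      rcases eq_or_ne x 0 with rfl | hx0
      · rw [norm_zero]
        have h0Q : (0 : V) ∈ Qset f := hx
        have : 0 ≤ f (Classical.arbitrary ι) 0 := h0Q _
        have hC0 : 0 ≤ C :=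
          le_trans this (Finset.le_sup' (fun i => f i 0) (Finset.mem_univ _))
        positivity
      · set u := ‖x‖⁻¹ • x with hu
        have hxpos : (0:ℝ) < ‖x‖ := norm_pos_iff.2 hx0
        have huK : u ∈ Metric.sphere (0 : V) 1 := by
          simp [hu, norm_smul, inv_mul_cancel₀ (ne_of_gt hxpos)]
        have hFu : F u ≤ -δ := by
          have := hu₀max huK
          simpa [hδ] using this
        obtain ⟨i, _, hieq⟩ := Finset.exists_mem_eq_inf' huniv fun i => (f i).linear u
        have hliu : (f i).linear u ≤ -δ := by rw [← hieq]; exact hFu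
        have hlix : (f i).linear x ≤ -δ * ‖x‖ := by
          have h2 : (f i).linear u = ‖x‖⁻¹ * (f i).linear x := by
            rw [hu, map_smul, smul_eq_mul]
          calc (f i).linear x = ‖x‖ * ((f i).linear u) := by
                rw [h2]; field_simp
            _ ≤ ‖x‖ * (-δ) := mul_le_mul_of_nonneg_left hliu hxpos.le
            _ = -δ * ‖x‖ := by ring
        have hfi : 0 ≤ f i x := hx i
        have hfi0 : f i x = (f i).linear x + f i 0 := by
          have := (f i).map_vadd 0 x
          simpa [vadd_eq_add] using this
        have hfiC : f i 0 ≤ C := Finset.le_sup' (fun i => f i 0) (Finset.mem_univ i)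
        have : δ * ‖x‖ ≤ C := by nlinarith
        rw [div_eq_inv_mul, ← mul_le_mul_iff_right₀ hδpos]
        calc δ * ‖x‖ ≤ C := this
          _ = δ * (δ⁻¹ * C) := by field_simp
    have hbd : Bornology.IsBounded (Qset f) :=
      isBounded_iff_forall_norm_le.2 ⟨C / δ, hbound⟩
    exact Metric.isCompact_iff_isClosed_bounded.2 ⟨Qset_closed, hbd⟩

/-- The sum of the linear parts is strictly positive on the nonzero part of a pointed `Rset`. -/
theorem Rset_pos_sum (hlf : Rset f ∩ -Rset f ⊆ {0}) {v : V} (hv : v ∈ Rset f) (hv0 : v ≠ 0) :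
    0 < (∑ i, (f i).linear) v := by
  have hsum : (∑ i, (f i).linear) v = ∑ i, (f i).linear v := by
    simp [LinearMap.sum_apply]
  rw [hsum]
  have hnn : ∀ i ∈ Finset.univ, (0:ℝ) ≤ (f i).linear v := fun i _ => hv i
  rcases eq_or_lt_of_le (Finset.sum_nonneg hnn) with h0 | hpos
  · exfalso
    have hall : ∀ i ∈ Finset.univ, (f i).linear v = 0 :=
      (Finset.sum_eq_zero_iff_of_nonneg hnn).1 h0.symm
    have hneg : -v ∈ Rset f := by
      intro i
      rw [map_neg, hall i (Finset.mem_univ i)]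
      simp
    have : v ∈ Rset f ∩ -Rset f := ⟨hv, by simpa using hneg⟩
    exact hv0 (hlf this)
  · exact hpos

theorem cell_singleton (a : V) : IsPolyhedralCell ({a} : Set V) := by
  classical
  set b := Module.finBasis ℝ V with hb
  refine ⟨⟨a, rfl⟩, Module.finrank ℝ V, 0,
    fun i => (b.coord i).toAffineMap - AffineMap.const ℝ V (b.coord i a), ![], ?_⟩
  ext x
  simp only [Set.mem_singleton_iff, Set.mem_setOf_eq]
  constructor
  · rintro rfl
    refine ⟨fun i => ?_, fun j => j.elim0⟩
    simp [AffineMap.coe_sub, AffineMap.coe_const]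
  · rintro ⟨h1, -⟩
    have : ∀ i, b.repr x i = b.repr a i := by
      intro i
      have := h1 i
      simp only [AffineMap.coe_sub, AffineMap.coe_const, Pi.sub_apply, Function.const_apply,
        LinearMap.coe_toAffineMap, sub_eq_zero] at this
      simpa [Module.Basis.coord_apply] using this
    exact b.ext_elem_iff.2 this

theorem dim_singleton (a : V) : cellDim ({a} : Set V) = 0 := by
  rw [cellDim, direction_affineSpan, vectorSpan_singleton]
  exact finrank_bot ℝ V

theorem vectorSpan_slice_lt (γ : V →ᵃ[ℝ] ℝ) {c : ℝ} {w : V}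
    (hw : w ∈ vectorSpan ℝ (Qset f)) (hγw : γ.linear w ≠ 0) :
    Module.finrank ℝ (vectorSpan ℝ (Qset f ∩ γ ⁻¹' {c})) <
      Module.finrank ℝ (vectorSpan ℝ (Qset f)) := by
  have hle : vectorSpan ℝ (Qset f ∩ γ ⁻¹' {c}) ≤
      vectorSpan ℝ (Qset f) ⊓ LinearMap.ker γ.linear := by
    refine le_inf (vectorSpan_mono ℝ inter_subset_left) ?_
    rw [vectorSpan_def, Submodule.span_le]
    rintro z ⟨p, hp, q, hq, rfl⟩
    rw [SetLike.mem_coe, LinearMap.mem_ker, AffineMap.linearMap_vsub]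
    have h1 : γ p = c := hp.2
    have h2 : γ q = c := hq.2
    simp [h1, h2, vsub_eq_sub]
  have hlt : vectorSpan ℝ (Qset f) ⊓ LinearMap.ker γ.linear < vectorSpan ℝ (Qset f) := by
    refine lt_of_le_of_ne inf_le_left fun h => hγw ?_
    have hw' : w ∈ vectorSpan ℝ (Qset f) ⊓ LinearMap.ker γ.linear := by
      rw [h]; exact hw
    exact LinearMap.mem_ker.1 hw'.2
  exact Submodule.finrank_lt_finrank_of_lt (lt_of_le_of_lt hle hlt)

theorem ind_ge_split (Q : Set V) (g : V → ℝ) {m : ℝ} (hlow : ∀ x ∈ Q, m ≤ g x) :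
    ind Q = ind (Q ∩ g ⁻¹' {m}) + ind (Q ∩ g ⁻¹' Set.Ioi m) := by
  funext x
  by_cases hQ : x ∈ Q
  · have hm := hlow x hQ
    simp only [ind, Set.mem_inter_iff, hQ, true_and, Set.mem_preimage, Set.mem_Ioi,
      Set.mem_singleton_iff, Pi.add_apply]
    rcases eq_or_lt_of_le hm with h | h
    · simp [h.symm, lt_irrefl]
    · simp [h, ne_of_gt h]
  · simp [ind, hQ]

end Compactness

section Main

variable {I : PolF V →+ ℤ}

theorem main_singleton {ι : Type} [Fintype ι] {f : ι → (V →ᵃ[ℝ] ℝ)} {a : V}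
    (hI : IsEulerHom I) (hQ : Qset f = {a}) :
    EVal I (ind (Qset f)) (if Rset f ⊆ {0} then 1 else 0) := by
  have hR : Rset f ⊆ {0} := by
    intro v hv
    have ha : a ∈ Qset f := by rw [hQ]; rfl
    have h1 : a + (1:ℝ) • v ∈ Qset f := Qset_recession ha hv zero_le_one
    rw [hQ, one_smul, Set.mem_singleton_iff] at h1
    rw [Set.mem_singleton_iff]
    exact add_eq_left.1 h1
  rw [if_pos hR, hQ]
  have := EVal_cell hI (cell_singleton a)
  rwa [dim_singleton, pow_zero] at this

set_option maxHeartbeats 1600000 in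
theorem main (hI : IsEulerHom I) :
    ∀ (k : ℕ) {ι : Type} [Fintype ι] (f : ι → (V →ᵃ[ℝ] ℝ)),
      (Qset f).Nonempty → (Rset f ∩ -(Rset f) ⊆ {0}) →
      Module.finrank ℝ (vectorSpan ℝ (Qset f)) ≤ k →
      EVal I (ind (Qset f)) (if Rset f ⊆ {0} then 1 else 0) := by
  intro k
  induction k with
  | zero =>
    intro ι _ f hne hlf hdim
    obtain ⟨a, ha⟩ := hne
    have hsub : Qset f = {a} := by
      ext z
      constructor
      · intro hz
        have hmem : z -ᵥ a ∈ vectorSpan ℝ (Qset f) := vsub_mem_vectorSpan ℝ hz ha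
        have h0 : vectorSpan ℝ (Qset f) = ⊥ :=
          Submodule.finrank_eq_zero.1 (Nat.le_zero.1 hdim)
        rw [h0, Submodule.mem_bot] at hmem
        rw [Set.mem_singleton_iff, ← vsub_eq_zero_iff_eq]
        exact hmem
      · rintro rfl; exact ha
    exact main_singleton hI hsub
  | succ k ih =>
    intro ι _ f hne hlf hdim
    by_cases hsing : ∃ a, Qset f = {a}
    · obtain ⟨a, ha⟩ := hsing
      exact main_singleton hI ha
    · obtain ⟨x0, hx0⟩ := hne
      have hxy : ∃ y ∈ Qset f, y ≠ x0 := by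
        by_contra h
        push_neg at h
        refine hsing ⟨x0, ?_⟩
        ext z
        simp only [Set.mem_singleton_iff]
        exact ⟨fun hz => h z hz, fun hz => hz ▸ hx0⟩
      obtain ⟨y0, hy0, hyx⟩ := hxy
      -- the oracle maker
      have mkoracle : ∀ γ : V →ᵃ[ℝ] ℝ,
          (∀ v, v ∈ Rset f → γ.linear v = 0 → v = 0) →
          (∃ w ∈ vectorSpan ℝ (Qset f), γ.linear w ≠ 0) →
          ∀ c', (Qset f ∩ ⇑γ ⁻¹' {c'}).Nonempty →
            EVal I (ind (Qset f ∩ ⇑γ ⁻¹' {c'})) 1 := by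
        intro γ hker hw c' hne'
        set f' : ι ⊕ Bool → (V →ᵃ[ℝ] ℝ) :=
          Sum.elim f (fun b => if b then γ - AffineMap.const ℝ V c'
            else AffineMap.const ℝ V c' - γ) with hf'
        have hQeq : Qset f' = Qset f ∩ ⇑γ ⁻¹' {c'} := by
          ext z
          simp only [Qset, hf', Set.mem_inter_iff, Set.mem_setOf_eq, Set.mem_preimage,
            Set.mem_singleton_iff, Sum.forall, Bool.forall_bool, Sum.elim_inl, Sum.elim_inr]
          constructor
          · rintro ⟨h1, hb1, hb2⟩
            norm_num [AffineMap.coe_sub, AffineMap.coe_const, sub_nonneg] at hb1 hb2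
            exact ⟨h1, le_antisymm hb1 hb2⟩
          · rintro ⟨h1, h2⟩
            refine ⟨h1, ?_, ?_⟩ <;>
              norm_num [AffineMap.coe_sub, AffineMap.coe_const, sub_nonneg, h2]
        have hReq : ∀ v, v ∈ Rset f' ↔ v ∈ Rset f ∧ γ.linear v = 0 := by
          intro v
          simp only [Rset, hf', Set.mem_setOf_eq, Sum.forall, Bool.forall_bool, Sum.elim_inl,
            Sum.elim_inr]
          constructor
          · rintro ⟨h1, hb1, hb2⟩
            norm_num [AffineMap.sub_linear, AffineMap.const_linear] at hb1 hb2
            exact ⟨h1, le_antisymm hb1 hb2⟩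
          · rintro ⟨h1, h2⟩
            refine ⟨h1, ?_, ?_⟩ <;>
              norm_num [AffineMap.sub_linear, AffineMap.const_linear, h2]
        have hR' : Rset f' ⊆ {0} := by
          intro v hv
          rw [Set.mem_singleton_iff]
          obtain ⟨hv1, hv2⟩ := (hReq v).1 hv
          exact hker v hv1 hv2
        obtain ⟨w, hwvs, hwγ⟩ := hw
        have hdim' : Module.finrank ℝ (vectorSpan ℝ (Qset f')) ≤ k := by
          rw [hQeq]
          have h1 := vectorSpan_slice_lt (f := f) γ (c := c') hwvs hwγ
          omega
        have hne'' : (Qset f').Nonempty := by rw [hQeq]; exact hne'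
        have hlf' : Rset f' ∩ -(Rset f') ⊆ {0} := fun v hv => hR' hv.1
        have hres := ih f' hne'' hlf' hdim'
        rw [if_pos hR', hQeq] at hres
        exact hres
      by_cases hR : Rset f ⊆ {0}
      -- ============ compact case ============
      · have hcpt := Qset_compact hR
        have hv0 : (x0 -ᵥ y0 : V) ≠ 0 := by
          rw [vsub_eq_sub, sub_ne_zero]
          exact fun h => hyx h.symm
        obtain ⟨φ, hφ1, hφ2⟩ := exists_dual_vector ℝ (x0 -ᵥ y0) (norm_ne_zero_iff.2 hv0)
        set γ : V →ᵃ[ℝ] ℝ := φ.toLinearMap.toAffineMap with hγdef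
        have hγlin : γ.linear = φ.toLinearMap := LinearMap.toAffineMap_linear _
        have hγw : γ.linear (x0 -ᵥ y0) ≠ 0 := by
          rw [hγlin]
          show φ (x0 -ᵥ y0) ≠ 0
          rw [hφ2]
          exact norm_ne_zero_iff.2 hv0
        have oracle := mkoracle γ
          (fun v hv _ => by have := hR hv; simpa using this)
          ⟨x0 -ᵥ y0, vsub_mem_vectorSpan ℝ hx0 hy0, hγw⟩
        obtain ⟨xm, hxmQ, hxmmin⟩ :=
          hcpt.exists_isMinOn ⟨x0, hx0⟩ (affine_continuous γ).continuousOn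
        obtain ⟨xM, hxMQ, hxMmax⟩ :=
          hcpt.exists_isMaxOn ⟨x0, hx0⟩ (affine_continuous γ).continuousOn
        set m := γ xm with hm
        set M := γ xM with hM
        have hlow : ∀ x ∈ Qset f, m ≤ γ x := fun x hx => hxmmin hx
        have hbdd : ∀ x ∈ Qset f, γ x ≤ M := fun x hx => hxMmax hx
        have hmM : m < M := by
          have hd : γ x0 - γ y0 = γ.linear (x0 -ᵥ y0) := by
            rw [AffineMap.linearMap_vsub]; simp [vsub_eq_sub]
          have hpos : 0 < γ.linear (x0 -ᵥ y0) := by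
            rw [hγlin]
            show 0 < φ (x0 -ᵥ y0)
            rw [hφ2]
            exact norm_pos_iff.2 hv0
          have h1 := hlow y0 hy0
          have h2 := hbdd x0 hx0
          linarith
        -- M is a critical value
        have hzM := mem_zcell_pattern hxMQ
        have hZne : (zcell f (patternZ f xM)).Nonempty := ⟨xM, hzM⟩
        have him : M ∈ γ '' zcell f (patternZ f xM) := ⟨xM, hzM, rfl⟩
        have hub : ∀ z ∈ γ '' zcell f (patternZ f xM), z ≤ M := by
          rintro z ⟨w, hw, rfl⟩; exact hbdd w (zcell_subset hw)
        have hsup : sSup (γ '' zcell f (patternZ f xM)) = M :=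
          le_antisymm (csSup_le ⟨M, him⟩ hub) (le_csSup ⟨M, hub⟩ him)
        have hTM : M ∈ Tcrit f γ := hsup ▸ sSup_mem_Tcrit γ hZne
        have hTmne : ((Tcrit f γ).filter fun r => m < r).Nonempty :=
          ⟨M, Finset.mem_filter.2 ⟨hTM, hmM⟩⟩
        set t₁ := ((Tcrit f γ).filter fun r => m < r).min' hTmne with ht₁
        have ht₁T : t₁ ∈ Tcrit f γ := (Finset.mem_filter.1 (Finset.min'_mem _ hTmne)).1
        have hmt₁ : m < t₁ := (Finset.mem_filter.1 (Finset.min'_mem _ hTmne)).2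
        have ht₁min : ∀ r ∈ Tcrit f γ, m < r → t₁ ≤ r := fun r hr hmr =>
          Finset.min'_le _ _ (Finset.mem_filter.2 ⟨hr, hmr⟩)
        have ht₁M : t₁ ≤ M := Tcrit_le γ hbdd hlow t₁ ht₁T
        set c₀ := (m + t₁) / 2 with hc₀
        have hmc₀ : m < c₀ := by rw [hc₀]; linarith
        have hc₀t₁ : c₀ < t₁ := by rw [hc₀]; linarith
        have hc₀M : c₀ < M := lt_of_lt_of_le hc₀t₁ ht₁M
        have hc₀T : c₀ ∉ Tcrit f γ := fun hmem =>
          absurd (ht₁min c₀ hmem hmc₀) (not_le.2 hc₀t₁)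
        have hwin : ∀ r ∈ Set.Ioo m c₀, r ∉ Tcrit f γ := by
          rintro r ⟨hr1, hr2⟩ hrT
          have := ht₁min r hrT hr1
          linarith
        have hmim : m ∈ γ '' Qset f := ⟨xm, hxmQ, rfl⟩
        have hMim : M ∈ γ '' Qset f := ⟨xM, hxMQ, rfl⟩
        have hmem_im : ∀ y : ℝ, m ≤ y → y ≤ M → y ∈ γ '' Qset f := fun y h1 h2 =>
          (Qimage_ordConn γ).out hmim hMim ⟨h1, h2⟩
        rw [if_pos hR, ind_ge_split (Qset f) (⇑γ) hlow, ind_Ioi_split (Qset f) (⇑γ) hmc₀]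
        have e1 : EVal I (ind (Qset f ∩ ⇑γ ⁻¹' {m})) 1 := oracle m ⟨xm, hxmQ, rfl⟩
        obtain ⟨s₁, hslab, hslice⟩ := slab_slice (f := f) γ hI Set.ordConnected_Ioo isOpen_Ioo
          hwin (fun Z hne => cell_window_Ioo γ hne)
          (show (m+c₀)/2 ∈ Set.Ioo m c₀ by constructor <;> [linarith; linarith])
          (show (3*m+c₀)/4 ∈ Set.Ioo m c₀ by constructor <;> [linarith; linarith])
          (by intro h; linarith [h])
        have hs₁ : s₁ = -1 := by
          have h1 := oracle ((m+c₀)/2)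
            (slice_nonempty_of_mem_image γ (hmem_im _ (by linarith) (by linarith)))
          have := hslice.unique h1
          omega
        rw [hs₁] at hslab
        have e3 : EVal I (ind (Qset f ∩ ⇑γ ⁻¹' {c₀})) 1 :=
          oracle c₀ (slice_nonempty_of_mem_image γ (hmem_im c₀ hmc₀.le hc₀M.le))
        have e4 := claimA γ hI oracle hbdd hlow hMim
          (((Tcrit f γ).filter fun r => c₀ < r).card) c₀ le_rfl
          (hmem_im c₀ hmc₀.le hc₀M.le)
        have total := e1.add (hslab.add (e3.add e4))
        norm_num at total
        convert total using 2 <;> norm_num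
      -- ============ unbounded case ============
      · obtain ⟨v₀, hv₀R, hv₀0⟩ : ∃ v ∈ Rset f, v ≠ 0 := by
          by_contra h
          push_neg at h
          exact hR fun v hv => h v hv
        obtain ⟨φ, hpos⟩ : ∃ φ : V →ₗ[ℝ] ℝ, ∀ v ∈ Rset f, v ≠ 0 → 0 < φ v :=
          ⟨∑ i, (f i).linear, fun v hv h0 => Rset_pos_sum hlf hv h0⟩
        obtain ⟨γ, hγlin⟩ : ∃ γ : V →ᵃ[ℝ] ℝ, γ.linear = φ :=
          ⟨φ.toAffineMap, LinearMap.toAffineMap_linear _⟩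
        have hker : ∀ v, v ∈ Rset f → γ.linear v = 0 → v = 0 := by
          intro v hv h0
          by_contra hne0
          rw [hγlin] at h0
          exact absurd h0 (ne_of_gt (hpos v hv hne0))
        have hx0v : x0 + v₀ ∈ Qset f := by
          have := Qset_recession hx0 hv₀R (zero_le_one (α := ℝ))
          rwa [one_smul] at this
        have hv₀vs : v₀ ∈ vectorSpan ℝ (Qset f) := by
          have := vsub_mem_vectorSpan ℝ hx0v hx0
          simpa [vsub_eq_sub] using this
        have hγv₀ : γ.linear v₀ ≠ 0 := by
          rw [hγlin]
          exact ne_of_gt (hpos v₀ hv₀R hv₀0)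
        have oracle := mkoracle γ hker ⟨v₀, hv₀vs, hγv₀⟩
        -- the truncated polyhedron Q ∩ {γ ≤ γ x0} is compact; γ attains its min on Q
        set f'' : ι ⊕ Unit → (V →ᵃ[ℝ] ℝ) :=
          Sum.elim f (fun _ => AffineMap.const ℝ V (γ x0) - γ) with hf''
        have hQ''eq : Qset f'' = {z | z ∈ Qset f ∧ γ z ≤ γ x0} := by
          ext z
          simp only [Qset, hf'', Set.mem_setOf_eq, Sum.forall, Sum.elim_inl, Sum.elim_inr]
          constructor
          · rintro ⟨h1, h2⟩
            have := h2 ()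
            norm_num [AffineMap.coe_sub, AffineMap.coe_const, sub_nonneg] at this
            exact ⟨h1, this⟩
          · rintro ⟨h1, h2⟩
            refine ⟨h1, fun _ => ?_⟩
            norm_num [AffineMap.coe_sub, AffineMap.coe_const, sub_nonneg, h2]
        have hR'' : Rset f'' ⊆ {0} := by
          intro v hv
          have h1 : v ∈ Rset f := fun i => hv (Sum.inl i)
          have h2 := hv (Sum.inr ())
          simp only [hf'', Sum.elim_inr, AffineMap.sub_linear, AffineMap.const_linear,
            LinearMap.sub_apply, LinearMap.zero_apply, zero_sub, LinearMap.neg_apply] at h2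
          rw [Set.mem_singleton_iff]
          by_contra hne0
          have := hpos v h1 hne0
          rw [← hγlin] at this
          linarith
        have hcpt'' := Qset_compact hR''
        have hne'' : (Qset f'').Nonempty := by
          rw [hQ''eq]; exact ⟨x0, hx0, le_refl _⟩
        obtain ⟨xm, hxmQ'', hxmmin⟩ :=
          hcpt''.exists_isMinOn hne'' (affine_continuous γ).continuousOn
        obtain ⟨m, hm⟩ : ∃ m : ℝ, m = γ xm := ⟨_, rfl⟩
        have hxmQ : xm ∈ Qset f := by
          have := hxmQ''; rw [hQ''eq] at this; exact this.1
        have hxmx0 : m ≤ γ x0 := by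
          rw [hm]; exact hxmmin (by rw [hQ''eq]; exact ⟨hx0, le_refl _⟩)
        have hlow : ∀ x ∈ Qset f, m ≤ γ x := by
          intro x hx
          by_cases hle : γ x ≤ γ x0
          · rw [hm]; exact hxmmin (by rw [hQ''eq]; exact ⟨hx, hle⟩)
          · push_neg at hle
            linarith
        -- upward nonemptiness of slices
        set vhat := (φ v₀)⁻¹ • v₀ with hvhat
        have hvhatR : vhat ∈ Rset f := Rset_smul hv₀R (inv_nonneg.2 (hpos v₀ hv₀R hv₀0).le)
        have hφvhat : φ vhat = 1 := by
          rw [hvhat, map_smul, smul_eq_mul]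
          exact inv_mul_cancel₀ (ne_of_gt (hpos v₀ hv₀R hv₀0))
        have hup : ∀ c', m ≤ c' → (Qset f ∩ ⇑γ ⁻¹' {c'}).Nonempty := by
          intro c' hc'
          refine ⟨xm + (c' - m) • vhat, Qset_recession hxmQ hvhatR (by linarith), ?_⟩
          show γ (xm + (c' - m) • vhat) = c'
          have h := γ.map_vadd xm ((c' - m) • vhat)
          simp only [vadd_eq_add] at h
          rw [show xm + (c' - m) • vhat = (c' - m) • vhat + xm from add_comm _ _, h, hγlin,
            map_smul, smul_eq_mul, hφvhat, ← hm]
          ring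
        -- choose c₀
        obtain ⟨c₀, hmc₀, hc₀T, hwin⟩ : ∃ c₀ : ℝ, m < c₀ ∧ c₀ ∉ Tcrit f γ ∧
            ∀ r ∈ Set.Ioo m c₀, r ∉ Tcrit f γ := by
          by_cases h2 : ((Tcrit f γ).filter fun r => m < r).Nonempty
          · set t₁ := ((Tcrit f γ).filter fun r => m < r).min' h2 with ht₁
            have hmt₁ : m < t₁ := (Finset.mem_filter.1 (Finset.min'_mem _ h2)).2
            have ht₁min : ∀ r ∈ Tcrit f γ, m < r → t₁ ≤ r := fun r hr hmr =>
              Finset.min'_le _ _ (Finset.mem_filter.2 ⟨hr, hmr⟩)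
            refine ⟨(m + t₁)/2, by linarith, ?_, ?_⟩
            · intro hmem
              have := ht₁min _ hmem (by linarith)
              linarith
            · rintro r ⟨hr1, hr2⟩ hrT
              have := ht₁min r hrT hr1
              linarith
          · refine ⟨m + 1, by linarith, ?_, ?_⟩
            · intro hmem
              exact h2 ⟨m + 1, Finset.mem_filter.2 ⟨hmem, by linarith⟩⟩
            · rintro r ⟨hr1, hr2⟩ hrT
              exact h2 ⟨r, Finset.mem_filter.2 ⟨hrT, hr1⟩⟩
        rw [if_neg hR, ind_ge_split (Qset f) (⇑γ) hlow, ind_Ioi_split (Qset f) (⇑γ) hmc₀]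
        have e1 : EVal I (ind (Qset f ∩ ⇑γ ⁻¹' {m})) 1 := oracle m ⟨xm, hxmQ, by
          rw [Set.mem_preimage, Set.mem_singleton_iff]; exact hm.symm⟩
        obtain ⟨s₁, hslab, hslice⟩ := slab_slice (f := f) γ hI Set.ordConnected_Ioo isOpen_Ioo
          hwin (fun Z hne => cell_window_Ioo γ hne)
          (show (m+c₀)/2 ∈ Set.Ioo m c₀ by constructor <;> [linarith; linarith])
          (show (3*m+c₀)/4 ∈ Set.Ioo m c₀ by constructor <;> [linarith; linarith])
          (by intro h; linarith [h])
        have hs₁ : s₁ = -1 := by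
          have h1 := oracle ((m+c₀)/2) (hup _ (by linarith))
          have := hslice.unique h1
          omega
        rw [hs₁] at hslab
        have e3 : EVal I (ind (Qset f ∩ ⇑γ ⁻¹' {c₀})) 1 := oracle c₀ (hup c₀ hmc₀.le)
        have e4 := claimB γ hI oracle (((Tcrit f γ).filter fun r => c₀ < r).card) c₀ le_rfl
          (fun c' hc' => hup c' (by linarith))
        have total := e1.add (hslab.add (e3.add e4))
        norm_num at total
        convert total using 2 <;> norm_num

end Main

section Interior

set_option synthInstance.maxHeartbeats 400000 in
set_option maxHeartbeats 800000 in
theorem dual_interior_iff {p : ℕ} (α : Fin p → (V →ₗ[ℝ] ℝ)) (ξ : V →L[ℝ] ℝ) :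
    ({x : V | ∀ i, 0 ≤ α i x} ∩ {v : V | ξ v ≤ 0} ⊆ {0}) ↔
      ξ ∈ interior {η : V →L[ℝ] ℝ | ∀ x ∈ {x : V | ∀ i, 0 ≤ α i x}, 0 ≤ η x} := by
  set σ : Set V := {x : V | ∀ i, 0 ≤ α i x} with hσdef
  have hσsmul : ∀ x ∈ σ, ∀ c : ℝ, 0 ≤ c → c • x ∈ σ := by
    intro x hx c hc i
    rw [map_smul, smul_eq_mul]
    exact mul_nonneg hc (hx i)
  constructor
  · intro hsub
    by_cases hσ0 : σ ⊆ {0}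
    · have hD : {η : V →L[ℝ] ℝ | ∀ x ∈ σ, 0 ≤ η x} = Set.univ := by
        ext η
        simp only [Set.mem_setOf_eq, Set.mem_univ, iff_true]
        intro x hx
        have : x = 0 := hσ0 hx
        rw [this]
        simp
      rw [hD, interior_univ]
      trivial
    · obtain ⟨x₁, hx₁σ, hx₁0⟩ : ∃ x₁ ∈ σ, x₁ ≠ 0 := by
        by_contra h
        push_neg at h
        exact hσ0 fun x hx => h x hx
      have hσclosed : IsClosed σ := by
        have : σ = ⋂ i, (α i) ⁻¹' (Set.Ici 0) := by
          ext x; simp [hσdef, Set.mem_iInter]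
        rw [this]
        exact isClosed_iInter fun i =>
          IsClosed.preimage (α i).continuous_of_finiteDimensional isClosed_Ici
      have hK : IsCompact (σ ∩ Metric.sphere (0:V) 1) :=
        (isCompact_sphere (0:V) 1).inter_left hσclosed
      have hKne : (σ ∩ Metric.sphere (0:V) 1).Nonempty := by
        refine ⟨‖x₁‖⁻¹ • x₁, hσsmul x₁ hx₁σ _ (inv_nonneg.2 (norm_nonneg _)), ?_⟩
        simp [norm_smul, inv_mul_cancel₀ (norm_ne_zero_iff.2 hx₁0)]
      obtain ⟨u₁, hu₁, hmin⟩ := hK.exists_isMinOn hKne ξ.continuous.continuousOn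
      set c := ξ u₁ with hc
      have hcpos : 0 < c := by
        rcases lt_or_ge 0 (ξ u₁) with h | h
        · exact h
        · exfalso
          have hu₁R : u₁ ∈ σ ∩ {v : V | ξ v ≤ 0} := ⟨hu₁.1, h⟩
          have h0 : u₁ = 0 := hsub hu₁R
          have hs := hu₁.2
          rw [h0] at hs
          simp at hs
      have hbound : ∀ x ∈ σ, c * ‖x‖ ≤ ξ x := by
        intro x hx
        rcases eq_or_ne x 0 with rfl | hx0
        · simp
        · have hxpos : (0:ℝ) < ‖x‖ := norm_pos_iff.2 hx0
          have hu : ‖x‖⁻¹ • x ∈ σ ∩ Metric.sphere (0:V) 1 := by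
            refine ⟨hσsmul x hx _ (inv_nonneg.2 (norm_nonneg _)), ?_⟩
            simp [norm_smul, inv_mul_cancel₀ (ne_of_gt hxpos)]
          have h1 : c ≤ ξ (‖x‖⁻¹ • x) := hmin hu
          rw [map_smul, smul_eq_mul] at h1
          calc c * ‖x‖ ≤ (‖x‖⁻¹ * ξ x) * ‖x‖ := by nlinarith
            _ = ξ x := by field_simp
      rw [mem_interior]
      refine ⟨Metric.ball ξ c, ?_, Metric.isOpen_ball, Metric.mem_ball_self hcpos⟩
      intro η hη x hx
      have hd : ‖ξ - η‖ < c := by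
        rw [Metric.mem_ball, dist_eq_norm] at hη
        rwa [← norm_neg, neg_sub]
      have h1 : (ξ - η) x ≤ ‖ξ - η‖ * ‖x‖ := by
        calc (ξ - η) x ≤ ‖(ξ - η) x‖ := le_abs_self _
          _ ≤ ‖ξ - η‖ * ‖x‖ := ContinuousLinearMap.le_opNorm _ _
      have h2 : η x = ξ x - (ξ - η) x := by
        simp [ContinuousLinearMap.sub_apply]
      have h3 := hbound x hx
      have h4 : ‖ξ - η‖ * ‖x‖ ≤ c * ‖x‖ :=
        mul_le_mul_of_nonneg_right hd.le (norm_nonneg x)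
      linarith
  · intro hint v ⟨hv1, hv2⟩
    rw [Set.mem_singleton_iff]
    by_contra hv0
    obtain ⟨ε, hεpos, hball⟩ : ∃ ε > 0, Metric.ball ξ ε ⊆
        {η : V →L[ℝ] ℝ | ∀ x ∈ σ, 0 ≤ η x} := by
      rw [mem_interior_iff_mem_nhds, Metric.mem_nhds_iff] at hint
      exact hint
    obtain ⟨φ, hφ1, hφ2⟩ := exists_dual_vector ℝ v (norm_ne_zero_iff.2 hv0)
    set η : V →L[ℝ] ℝ := ξ - (ε/2) • φ with hηdef
    have hηball : η ∈ Metric.ball ξ ε := by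
      rw [Metric.mem_ball, dist_eq_norm, hηdef]
      have h1 : ξ - (ε/2) • φ - ξ = -((ε/2) • φ) := by abel
      have h2 : ‖(ε/2) • φ‖ = ε/2 := by
        have h2' := norm_smul (ε/2) φ
        rw [h2', hφ1, mul_one, Real.norm_eq_abs, abs_of_pos (show (0:ℝ) < ε/2 by linarith)]
      rw [h1, norm_neg, h2]
      linarith
    have hηD := hball hηball v hv1
    rw [hηdef] at hηD
    simp only [ContinuousLinearMap.sub_apply, ContinuousLinearMap.smul_apply,
      smul_eq_mul] at hηD
    have hnv : 0 < ‖v‖ := norm_pos_iff.2 hv0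
    have hφv : 0 < φ v := by
      rw [hφ2]
      exact_mod_cast hnv
    have hξv : ξ v ≤ 0 := hv2
    nlinarith

end Interior

end EulerAux


open EulerAux

open Classical in
/-- `FT(i_σ) = (-1)^{dim σ^∨} j_{σ^∨}`: for a pointed closed polyhedral
cone `σ ⊆ V` with dual cone `σ^∨ ⊆ V*`, and any `ξ ∈ V*`, the Euler integral of the
indicator of `σ ∩ {x | ξ x ≤ 1}` is `1` if `ξ` lies in the interior of `σ^∨` and `0`
otherwise. -/
theorem statement3 (V : Type*) [NormedAddCommGroup V] [NormedSpace ℝ V]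
    [FiniteDimensional ℝ V]
    (I : PolF V →+ ℤ) (hI : IsEulerHom I)
    (σ : Set V) (hσ : IsPolyhedralCone σ) (hpointed : σ ∩ (-σ) = {0})
    (ξ : V →L[ℝ] ℝ) :
    ∃ hmem : ind (σ ∩ {x : V | ξ x ≤ 1}) ∈ PolF V,
      I ⟨ind (σ ∩ {x : V | ξ x ≤ 1}), hmem⟩ =
        if ξ ∈ interior {η : V →L[ℝ] ℝ | ∀ x ∈ σ, 0 ≤ η x} then 1 else 0 := by
  obtain ⟨p, α, rfl⟩ := hσ
  set σ : Set V := {x : V | ∀ i, 0 ≤ α i x} with hσdef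
  set F : (Fin p ⊕ Unit) → (V →ᵃ[ℝ] ℝ) :=
    Sum.elim (fun i => (α i).toAffineMap)
      (fun _ => AffineMap.const ℝ V 1 - ξ.toLinearMap.toAffineMap) with hF
  have hQeq : Qset F = σ ∩ {x : V | ξ x ≤ 1} := by
    ext z
    simp only [Qset, hF, Set.mem_inter_iff, Set.mem_setOf_eq, Sum.forall, Sum.elim_inl,
      Sum.elim_inr, hσdef]
    constructor
    · rintro ⟨h1, h2⟩
      refine ⟨fun i => by simpa using h1 i, ?_⟩
      have := h2 ()
      norm_num [AffineMap.coe_sub, AffineMap.coe_const, sub_nonneg] at this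
      exact this
    · rintro ⟨h1, h2⟩
      refine ⟨fun i => by simpa using h1 i, fun _ => ?_⟩
      norm_num [AffineMap.coe_sub, AffineMap.coe_const, sub_nonneg]
      exact h2
  have hReq : Rset F = σ ∩ {v : V | ξ v ≤ 0} := by
    ext v
    simp only [Rset, hF, Set.mem_inter_iff, Set.mem_setOf_eq, Sum.forall, Sum.elim_inl,
      Sum.elim_inr, hσdef]
    constructor
    · rintro ⟨h1, h2⟩
      refine ⟨fun i => by simpa using h1 i, ?_⟩
      have := h2 ()
      simp only [AffineMap.sub_linear, AffineMap.const_linear, LinearMap.sub_apply,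
        LinearMap.zero_apply, zero_sub, LinearMap.neg_apply,
        LinearMap.toAffineMap_linear] at this
      have h3 : (ξ.toLinearMap) v = ξ v := rfl
      linarith [this]
    · rintro ⟨h1, h2⟩
      refine ⟨fun i => by simpa using h1 i, fun _ => ?_⟩
      simp only [AffineMap.sub_linear, AffineMap.const_linear, LinearMap.sub_apply,
        LinearMap.zero_apply, zero_sub, LinearMap.neg_apply,
        LinearMap.toAffineMap_linear]
      have h3 : (ξ.toLinearMap) v = ξ v := rfl
      linarith
  have hne : (Qset F).Nonempty := by
    refine ⟨0, ?_⟩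
    rw [hQeq]
    constructor
    · intro i; simp
    · simp
  have hlf : Rset F ∩ -(Rset F) ⊆ {0} := by
    intro v hv
    have h1 := hv.1
    have h2 := hv.2
    rw [hReq] at h1
    have h2' : -v ∈ Rset F := by
      rw [Set.mem_neg] at h2
      exact h2
    rw [hReq] at h2'
    rw [← hpointed]
    exact ⟨h1.1, by rw [Set.mem_neg]; exact h2'.1⟩
  have hdim : Module.finrank ℝ (vectorSpan ℝ (Qset F)) ≤ Module.finrank ℝ V :=
    Submodule.finrank_le _
  have hmain := main hI (Module.finrank ℝ V) F hne hlf hdim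
  have hiff : (Rset F ⊆ {0}) ↔
      ξ ∈ interior {η : V →L[ℝ] ℝ | ∀ x ∈ σ, 0 ≤ η x} := by
    rw [hReq]
    exact dual_interior_iff α ξ
  rw [hQeq] at hmain
  obtain ⟨hmem, hval⟩ := hmain
  refine ⟨hmem, ?_⟩
  rw [hval]
  exact if_congr hiff rfl rfl
end
end

section
/- Let V be an n-dimensional real vector space, let σ ⊆ V be a pointed closed convex polyhedral cone with dual cone σ^∨ ⊆ V*, and let U be the topological interior of σ^∨ (which is nonempty since σ is pointed). Then for every v ∈ V, I(1_{U ∩ {ξ : ξ(v) ≤ 1}}) equals (−1)^n if v ∈ −σ, and equals 0 otherwise. (This is the formula FT(j_{σ^∨}) = i_{−σ} for the Fourier–Sato transform of the costandard indicator function of σ^∨.) -/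
section Aux

open Finset

variable {V : Type*} [AddCommGroup V] [Module ℝ V]

/-- membership in the cone generated by a finite family -/
def InCone {κ : Type*} [Fintype κ] (g : κ → V) (x : V) : Prop :=
  ∃ c : κ → ℝ, (∀ k, 0 ≤ c k) ∧ x = ∑ k, c k • g k

theorem fourier_motzkin [FiniteDimensional ℝ V] :
    ∀ (p : ℕ) (α : Fin p → (V →ₗ[ℝ] ℝ)),
      ∃ (κ : Type) (_ : Fintype κ) (g : κ → V),
        (∀ k i, 0 ≤ α i (g k)) ∧ ∀ x, (∀ i, 0 ≤ α i x) → InCone g x := by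
  intro p
  induction p with
  | zero =>
    intro α
    classical
    set n := Module.finrank ℝ V with hn
    let b := Module.finBasis ℝ V
    refine ⟨Fin n ⊕ Fin n, inferInstance, Sum.elim (fun j => b j) (fun j => -(b j)), ?_, ?_⟩
    · exact fun k i => i.elim0
    · intro x _
      refine ⟨Sum.elim (fun j => max (b.repr x j) 0) (fun j => max (-(b.repr x j)) 0), ?_, ?_⟩
      · rintro (j | j) <;> simp [le_max_right]
      · rw [Fintype.sum_sum_type]
        simp only [Sum.elim_inl, Sum.elim_inr]
        rw [← Finset.sum_add_distrib]
        have key : ∀ j : Fin n, max (b.repr x j) 0 • b j + max (-(b.repr x j)) 0 • (-(b j))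
            = b.repr x j • b j := by
          intro j
          rw [smul_neg, ← sub_eq_add_neg, ← sub_smul, max_zero_sub_max_neg_zero_eq_self]
        rw [Finset.sum_congr rfl fun j _ => key j, Module.Basis.sum_repr]
  | succ p ih =>
    intro α
    classical
    obtain ⟨κ, hκ, g, h1, h2⟩ := ih (fun i => α i.castSucc)
    set β := α (Fin.last p) with hβ
    set b : κ → ℝ := fun k => β (g k) with hb
    refine ⟨κ ⊕ (κ × κ), inferInstance,
      Sum.elim (fun k => if 0 ≤ b k then g k else 0)
        (fun jk => if 0 < b jk.1 ∧ b jk.2 < 0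
          then b jk.1 • g jk.2 + (-(b jk.2)) • g jk.1 else 0), ?_, ?_⟩
    · rintro (k | ⟨j, k⟩) i
      · dsimp only [Sum.elim_inl]
        split_ifs with hk
        · refine Fin.lastCases ?_ ?_ i
          · exact hk
          · intro j; exact h1 k j
        · simp
      · dsimp only [Sum.elim_inr]
        split_ifs with hjk
        · obtain ⟨hj, hk⟩ := hjk
          refine Fin.lastCases ?_ ?_ i
          · simp only [map_add, map_smul, smul_eq_mul, ← hβ, ← hb]
            nlinarith
          · intro i
            simp only [map_add, map_smul, smul_eq_mul]
            have := h1 j i; have := h1 k i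
            nlinarith
        · simp
    · intro x hx
      obtain ⟨c, hc, hxc⟩ := h2 x (fun i => hx i.castSucc)
      have hs : 0 ≤ β x := hx (Fin.last p)
      have hsx : β x = ∑ k, c k * b k := by
        rw [hxc, map_sum]; exact Finset.sum_congr rfl fun k _ => by rw [map_smul, smul_eq_mul]
      set u : κ → ℝ := fun j => if 0 < b j then c j else 0 with hu
      set T : ℝ := ∑ j, u j * b j with hT
      set m : ℝ := ∑ k, (if b k < 0 then c k * b k else 0) with hm
      have hun : ∀ k, 0 ≤ u k := by
        intro k; rw [hu]; dsimp only; split_ifs with h; exacts [hc k, le_refl 0]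
      have huc : ∀ k, u k ≤ c k := by
        intro k; rw [hu]; dsimp only; split_ifs with h; exacts [le_refl _, hc k]
      have hsplit : β x = T + m := by
        rw [hsx, hT, hm, ← Finset.sum_add_distrib]
        refine Finset.sum_congr rfl fun k _ => ?_
        rw [hu]; dsimp only
        rcases lt_trichotomy (b k) 0 with h | h | h
        · rw [if_neg (not_lt.mpr h.le), if_pos h]; ring
        · simp [h]
        · rw [if_pos h, if_neg (asymm h)]; ring
      have hT0 : 0 ≤ T := Finset.sum_nonneg fun j _ => by
        rcases lt_or_ge 0 (b j) with h | h
        · exact mul_nonneg (hun j) h.le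
        · rw [hu]; dsimp only; rw [if_neg (not_lt.mpr h)]; simp
      have hm0 : m ≤ 0 := Finset.sum_nonpos fun k _ => by
        split_ifs with h
        · exact mul_nonpos_of_nonneg_of_nonpos (hc k) h.le
        · simp
      have hmT : -m ≤ T := by linarith
      have hczero : T = 0 → ∀ k, b k < 0 → c k = 0 := by
        intro hTz k hk
        have hmz : (∑ k, (if b k < 0 then c k * b k else 0)) = 0 := by
          rw [← hm]; linarith
        have hterm := (Finset.sum_eq_zero_iff_of_nonpos (fun k _ => by
            split_ifs with h
            · exact mul_nonpos_of_nonneg_of_nonpos (hc k) h.le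
            · exact le_refl (0:ℝ))).mp hmz k (Finset.mem_univ k)
        rw [if_pos hk] at hterm
        exact (mul_eq_zero.mp hterm).resolve_right (ne_of_lt hk)
      rcases eq_or_lt_of_le hT0 with hTz | hTpos
      · replace hTz := hTz.symm
        refine ⟨Sum.elim (fun k => if 0 ≤ b k then c k else 0) (fun _ => 0), ?_, ?_⟩
        · rintro (k | jk)
          · dsimp only [Sum.elim_inl]; split_ifs with h; exacts [hc k, le_refl 0]
          · exact le_refl 0
        · rw [Fintype.sum_sum_type]
          simp only [Sum.elim_inl, Sum.elim_inr, zero_smul, Finset.sum_const_zero, add_zero]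
          rw [hxc]
          refine Finset.sum_congr rfl fun k _ => ?_
          by_cases h : 0 ≤ b k
          · rw [if_pos h, if_pos h]
          · rw [if_neg h, if_neg h, hczero hTz k (not_le.mp h)]; simp
      · -- T > 0
        set vv : κ → ℝ := fun k => if b k < 0 then c k / T else 0 with hvv
        set M : ℝ := ∑ k, vv k * (-(b k)) with hM
        have hvn : ∀ k, 0 ≤ vv k := by
          intro k; rw [hvv]; dsimp only; split_ifs with h
          exacts [div_nonneg (hc k) hT0, le_refl 0]
        have hM0 : 0 ≤ M := Finset.sum_nonneg fun k _ => by
          rcases lt_or_ge (b k) 0 with h | h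
          · exact mul_nonneg (hvn k) (by linarith)
          · rw [hvv]; dsimp only; rw [if_neg (not_lt.mpr h)]; simp
        have hMm : M * T = -m := by
          rw [hM, hm, Finset.sum_mul, ← Finset.sum_neg_distrib]
          refine Finset.sum_congr rfl fun k _ => ?_
          rw [hvv]; dsimp only
          split_ifs with h
          · field_simp
          · simp
        have hM1 : M ≤ 1 := by
          nlinarith
        refine ⟨Sum.elim (fun k => if 0 ≤ b k then c k - u k * M else 0)
            (fun jk => u jk.1 * vv jk.2), ?_, ?_⟩
        · rintro (k | jk)
          · dsimp only [Sum.elim_inl]; split_ifs with h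
            · have h1k : u k * M ≤ u k := mul_le_of_le_one_right (hun k) hM1
              have := huc k; linarith
            · exact le_refl 0
          · exact mul_nonneg (hun jk.1) (hvn jk.2)
        · have key : (∑ k' : κ ⊕ κ × κ, (Sum.elim (fun k => if 0 ≤ b k then c k - u k * M else 0)
              (fun jk => u jk.1 * vv jk.2) k') •
              (Sum.elim (fun k => if 0 ≤ b k then g k else 0)
                (fun jk => if 0 < b jk.1 ∧ b jk.2 < 0
                  then b jk.1 • g jk.2 + (-(b jk.2)) • g jk.1 else 0) k'))
              = ∑ k, c k • g k := by
            rw [Fintype.sum_sum_type, Fintype.sum_prod_type]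
            simp only [Sum.elim_inl, Sum.elim_inr]
            have e1 : ∀ k, (if 0 ≤ b k then c k - u k * M else 0) • (if 0 ≤ b k then g k else 0)
                = (if 0 ≤ b k then c k - u k * M else 0) • g k := by
              intro k; split_ifs with h
              · rfl
              · simp
            have e2 : ∀ (j k : κ), (u j * vv k) • (if 0 < b j ∧ b k < 0
                  then b j • g k + (-(b k)) • g j else 0)
                = (u j * vv k * b j) • g k + (u j * vv k * (-(b k))) • g j := by
              intro j k
              split_ifs with h
              · rw [smul_add, smul_smul, smul_smul]
              · have h0 : u j * vv k = 0 := by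
                  rcases not_and_or.mp h with h' | h'
                  · rw [hu]; dsimp only; rw [if_neg h', zero_mul]
                  · rw [hvv]; dsimp only; rw [if_neg h', mul_zero]
                rw [h0]; simp
            rw [Finset.sum_congr rfl fun k _ => e1 k]
            rw [Finset.sum_congr rfl fun j _ => Finset.sum_congr rfl fun k _ => e2 j k]
            rw [Finset.sum_congr rfl fun j (_ : j ∈ Finset.univ) => Finset.sum_add_distrib]
            rw [Finset.sum_add_distrib]
            have eA : (∑ j : κ, ∑ k : κ, (u j * vv k * b j) • g k) = ∑ k, (T * vv k) • g k := by
              rw [Finset.sum_comm]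
              refine Finset.sum_congr rfl fun k _ => ?_
              rw [← Finset.sum_smul]
              congr 1
              rw [hT, Finset.sum_mul]
              exact Finset.sum_congr rfl fun j _ => by ring
            have eB : (∑ j : κ, ∑ k : κ, (u j * vv k * (-(b k))) • g j)
                = ∑ j, (u j * M) • g j := by
              refine Finset.sum_congr rfl fun j _ => ?_
              rw [← Finset.sum_smul]
              congr 1
              rw [hM, Finset.mul_sum]
              exact Finset.sum_congr rfl fun k _ => by ring
            rw [eA, eB, ← Finset.sum_add_distrib, ← Finset.sum_add_distrib]
            refine Finset.sum_congr rfl fun k _ => ?_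
            rw [← add_smul, ← add_smul]
            congr 1
            rw [hu, hvv]; dsimp only
            rcases lt_trichotomy (b k) 0 with h | h | h
            · rw [if_neg (not_le.mpr h), if_neg (asymm h), if_pos h]
              field_simp
              ring
            · simp [h]
            · rw [if_pos h.le, if_pos h, if_neg (not_lt.mpr h.le)]
              ring
          rw [hxc, ← key]


section Helpers

theorem exists_generators {V : Type*} [AddCommGroup V] [Module ℝ V] [FiniteDimensional ℝ V]
    {p : ℕ} (α : Fin p → (V →ₗ[ℝ] ℝ)) :
    ∃ (m : ℕ) (g : Fin m → V),
      (∀ k i, 0 ≤ α i (g k)) ∧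
      ∀ x, (∀ i, 0 ≤ α i x) → ∃ c : Fin m → ℝ, (∀ k, 0 ≤ c k) ∧ x = ∑ k, c k • g k := by
  obtain ⟨κ, hκ, g, h1, h2⟩ := fourier_motzkin p α
  refine ⟨Fintype.card κ, g ∘ (Fintype.equivFin κ).symm, fun k i => h1 _ i, ?_⟩
  intro x hx
  obtain ⟨c, hc, hxc⟩ := h2 x hx
  refine ⟨c ∘ (Fintype.equivFin κ).symm, fun k => hc _, ?_⟩
  rw [hxc]
  exact (Equiv.sum_comp (Fintype.equivFin κ).symm (fun k => c k • g k)).symm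

/-- evaluation at `x` as a linear map on the continuous dual -/
def evalL {V : Type*} [NormedAddCommGroup V] [NormedSpace ℝ V] (x : V) :
    (V →L[ℝ] ℝ) →ₗ[ℝ] ℝ where
  toFun η := η x
  map_add' a b := rfl
  map_smul' r a := rfl

@[simp] theorem evalL_apply {V : Type*} [NormedAddCommGroup V] [NormedSpace ℝ V] (x : V)
    (η : V →L[ℝ] ℝ) : evalL x η = η x := rfl

theorem exists_pos_mem {W : Type*} [NormedAddCommGroup W] [NormedSpace ℝ W] {C : Set W}
    (hC : IsOpen C) {x : W} (hx : x ∈ C) (w : W) : ∃ ε : ℝ, 0 < ε ∧ x + ε • w ∈ C := by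
  have hcont : Continuous fun t : ℝ => x + t • w := by continuity
  have h0 : (fun t : ℝ => x + t • w) 0 = x := by simp
  have hmem : (fun t : ℝ => x + t • w) ⁻¹' C ∈ nhds (0 : ℝ) :=
    hcont.continuousAt.preimage_mem_nhds (by simpa using hC.mem_nhds hx)
  rcases Metric.mem_nhds_iff.mp hmem with ⟨ε, hε, hball⟩
  refine ⟨ε / 2, by linarith, hball ?_⟩
  rw [Metric.mem_ball, Real.dist_eq, sub_zero, abs_of_pos (by linarith)]
  linarith

theorem cellDim_of_isOpen' {W : Type*} [NormedAddCommGroup W] [NormedSpace ℝ W]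
    [FiniteDimensional ℝ W] {C : Set W} (hC : IsOpen C) (hne : C.Nonempty) :
    Module.finrank ℝ (affineSpan ℝ C).direction = Module.finrank ℝ W := by
  rw [hC.affineSpan_eq_top hne, AffineSubspace.direction_top, finrank_top]

theorem finrank_clm_dual {V : Type*} [NormedAddCommGroup V] [NormedSpace ℝ V]
    [FiniteDimensional ℝ V] :
    Module.finrank ℝ (V →L[ℝ] ℝ) = Module.finrank ℝ V :=
  ((LinearMap.toContinuousLinearMap : (V →ₗ[ℝ] ℝ) ≃ₗ[ℝ] (V →L[ℝ] ℝ)).finrank_eq).symm.trans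
    Subspace.dual_finrank_eq

theorem cellDim_slice {W : Type*} [NormedAddCommGroup W] [NormedSpace ℝ W]
    [FiniteDimensional ℝ W] {C : Set W} (hC : IsOpen C) (ℓ : W →ₗ[ℝ] ℝ) {x₀ : W}
    (hx₀ : x₀ ∈ C) (hℓ : ℓ x₀ = 1) :
    Module.finrank ℝ (affineSpan ℝ (C ∩ {y | ℓ y = 1})).direction + 1 = Module.finrank ℝ W := by
  have hdir : (affineSpan ℝ (C ∩ {y | ℓ y = 1})).direction = LinearMap.ker ℓ := by
    apply le_antisymm
    · have hsub : C ∩ {y | ℓ y = 1} ⊆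
          (AffineSubspace.mk' x₀ (LinearMap.ker ℓ) : AffineSubspace ℝ W) := by
        rintro y ⟨-, hy⟩
        rw [Set.mem_setOf_eq] at hy
        show y ∈ AffineSubspace.mk' x₀ (LinearMap.ker ℓ)
        rw [AffineSubspace.mem_mk', LinearMap.mem_ker, vsub_eq_sub, map_sub, hy,
          hℓ, sub_self]
      have := AffineSubspace.direction_le ((affineSpan_le).mpr hsub)
      rwa [AffineSubspace.direction_mk'] at this
    · intro w hw
      obtain ⟨ε, hε, hεmem⟩ := exists_pos_mem hC hx₀ w
      have h1 : x₀ + ε • w ∈ C ∩ {y | ℓ y = 1} := by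
        refine ⟨hεmem, ?_⟩
        have : ℓ w = 0 := LinearMap.mem_ker.mp hw
        simp [map_add, map_smul, hℓ, this]
      have h2 : x₀ ∈ C ∩ {y | ℓ y = 1} := ⟨hx₀, hℓ⟩
      have hmem := AffineSubspace.vsub_mem_direction
        (subset_affineSpan ℝ _ h1) (subset_affineSpan ℝ _ h2)
      have hv : (x₀ + ε • w) -ᵥ x₀ = ε • w := by
        rw [vsub_eq_sub]; abel
      rw [hv] at hmem
      have hmem2 := Submodule.smul_mem _ ε⁻¹ hmem
      rwa [smul_smul, inv_mul_cancel₀ (ne_of_gt hε), one_smul] at hmem2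
  rw [hdir]
  have hr := LinearMap.finrank_range_add_finrank_ker ℓ
  have hrange : LinearMap.range ℓ = ⊤ := by
    rw [Submodule.eq_top_iff']
    intro r
    have h1 : (1 : ℝ) ∈ LinearMap.range ℓ := ⟨x₀, hℓ⟩
    have := Submodule.smul_mem _ r h1
    simpa using this
  rw [hrange, finrank_top, Module.finrank_self] at hr
  omega

end Helpers



end Aux


set_option maxHeartbeats 1000000 in
open Classical in
/-- `FT(j_{σ^∨}) = i_{-σ}`: for a pointed closed polyhedral cone
`σ` in an `n`-dimensional real vector space `V`, with `U` the interior of the dual cone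
`σ^∨ ⊆ V*`, and any `v ∈ V`, the Euler integral (on `V*`) of the indicator of
`U ∩ {ξ | ξ v ≤ 1}` is `(-1)^n` if `v ∈ -σ` and `0` otherwise. -/
theorem statement4 (V : Type*) [NormedAddCommGroup V] [NormedSpace ℝ V]
    [FiniteDimensional ℝ V] (n : ℕ) (hn : Module.finrank ℝ V = n)
    (Id : PolF (V →L[ℝ] ℝ) →+ ℤ) (hId : IsEulerHom Id)
    (σ : Set V) (hσ : IsPolyhedralCone σ) (hpointed : σ ∩ (-σ) = {0})
    (U : Set (V →L[ℝ] ℝ)) (hU : U = interior {η : V →L[ℝ] ℝ | ∀ x ∈ σ, 0 ≤ η x})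
    (v : V) :
    ∃ hmem : ind (U ∩ {ξ : V →L[ℝ] ℝ | ξ v ≤ 1}) ∈ PolF (V →L[ℝ] ℝ),
      Id ⟨ind (U ∩ {ξ : V →L[ℝ] ℝ | ξ v ≤ 1}), hmem⟩ =
        if v ∈ -σ then (-1) ^ n else 0 := by
  classical
  obtain ⟨p, α, hα⟩ := hσ
  obtain ⟨m, g, hg1, hg2⟩ := exists_generators α
  have hmemσ : ∀ x, x ∈ σ ↔ ∀ i, 0 ≤ α i x := fun x => by rw [hα]; exact Iff.rfl
  have hgσ : ∀ k, g k ∈ σ := fun k => (hmemσ (g k)).mpr (fun i => hg1 k i)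
  have hevcont : ∀ x : V, Continuous fun η : V →L[ℝ] ℝ => η x :=
    fun x => (evalL x).continuous_of_finiteDimensional
  set D : Set (V →L[ℝ] ℝ) := {η | ∀ x ∈ σ, 0 ≤ η x} with hD
  set T : Set (V →L[ℝ] ℝ) := {η | ∀ k, g k ≠ 0 → 0 < η (g k)} with hTdef
  have hTopen : IsOpen T := by
    have hiT : T = ⋂ k : Fin m, {η : V →L[ℝ] ℝ | g k ≠ 0 → 0 < η (g k)} := by
      ext η; simp [hTdef, Set.mem_iInter]
    rw [hiT]
    refine isOpen_iInter_of_finite fun k => ?_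
    by_cases hk : g k = 0
    · have huniv : {η : V →L[ℝ] ℝ | g k ≠ 0 → 0 < η (g k)} = Set.univ := by
        ext η; simp [hk]
      rw [huniv]; exact isOpen_univ
    · have hpre : {η : V →L[ℝ] ℝ | g k ≠ 0 → 0 < η (g k)}
          = (fun η : V →L[ℝ] ℝ => η (g k)) ⁻¹' Set.Ioi 0 := by
        ext η; simp [hk]
      rw [hpre]
      exact (hevcont (g k)).isOpen_preimage _ isOpen_Ioi
  have hUopen : IsOpen U := by rw [hU]; exact isOpen_interior
  have hTsub : T ⊆ D := by
    intro η hη x hx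
    obtain ⟨c, hc, hxc⟩ := hg2 x ((hmemσ x).mp hx)
    rw [hxc, map_sum]
    refine Finset.sum_nonneg fun k _ => ?_
    rw [map_smul, smul_eq_mul]
    by_cases hk : g k = 0
    · simp [hk]
    · exact mul_nonneg (hc k) (hη k hk).le
  have hTU : T = U := by
    apply Set.Subset.antisymm
    · rw [hU]; exact interior_maximal hTsub hTopen
    · rw [hU]
      intro η hη k hk
      have hηD : η ∈ D := interior_subset hη
      have h0 : 0 ≤ η (g k) := hηD (g k) (hgσ k)
      rcases h0.lt_or_eq with hlt | heq
      · exact hlt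
      · exfalso
        obtain ⟨f, hf⟩ := SeparatingDual.exists_eq_one (R := ℝ) hk
        obtain ⟨ε, hε, hmem'⟩ := exists_pos_mem isOpen_interior hη (-f)
        have h2 : 0 ≤ (η + ε • (-f)) (g k) := (interior_subset hmem') (g k) (hgσ k)
        rw [ContinuousLinearMap.add_apply, ContinuousLinearMap.smul_apply,
          ContinuousLinearMap.neg_apply, hf, ← heq] at h2
        simp only [smul_eq_mul, mul_neg, mul_one, zero_add] at h2
        linarith
  set η₀ : V →L[ℝ] ℝ := ∑ i, LinearMap.toContinuousLinearMap (α i) with hη₀def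
  have hη₀app : ∀ x : V, η₀ x = ∑ i, α i x := by
    intro x
    rw [hη₀def, ContinuousLinearMap.sum_apply]
    exact Finset.sum_congr rfl fun i _ => by simp
  have hη₀pos : ∀ x, x ∈ σ → x ≠ 0 → 0 < η₀ x := by
    intro x hx hx0
    have hax : ∀ i, 0 ≤ α i x := (hmemσ x).mp hx
    rw [hη₀app]
    rcases (Finset.sum_nonneg (fun i (_ : i ∈ Finset.univ) => hax i)).lt_or_eq with h | h
    · exact h
    · exfalso
      have hall : ∀ i ∈ Finset.univ, α i x = 0 :=
        (Finset.sum_eq_zero_iff_of_nonneg (fun i _ => hax i)).mp h.symm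
      have hxneg : -x ∈ σ := (hmemσ (-x)).mpr (fun i => by
        rw [map_neg, hall i (Finset.mem_univ i)]; simp)
      have hx00 : x ∈ σ ∩ (-σ) := ⟨hx, Set.mem_neg.mpr hxneg⟩
      rw [hpointed] at hx00
      exact hx0 hx00
  have hη₀T : η₀ ∈ T := fun k hk => hη₀pos (g k) (hgσ k) hk
  have hη₀U : η₀ ∈ U := hTU ▸ hη₀T
  have hTsmul : ∀ (c : ℝ), 0 < c → ∀ η ∈ T, c • η ∈ T := by
    intro c hc η hη k hk
    rw [ContinuousLinearMap.smul_apply, smul_eq_mul]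
    exact mul_pos hc (hη k hk)
  have hTaddα : ∀ (t : ℝ), 0 ≤ t → ∀ i : Fin p, ∀ η ∈ T,
      η + t • LinearMap.toContinuousLinearMap (α i) ∈ T := by
    intro t ht i η hη k hk
    rw [ContinuousLinearMap.add_apply, ContinuousLinearMap.smul_apply, smul_eq_mul]
    have h1 := hη k hk
    have h2 : (0:ℝ) ≤ (LinearMap.toContinuousLinearMap (α i)) (g k) := by
      simpa using hg1 k i
    nlinarith
  set gU : Fin m → ((V →L[ℝ] ℝ) →ᵃ[ℝ] ℝ) := fun j =>
    if g j = 0 then AffineMap.const ℝ (V →L[ℝ] ℝ) (1:ℝ) else (evalL (g j)).toAffineMap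
    with hgUdef
  have hgUiff : ∀ η : V →L[ℝ] ℝ, (∀ j, 0 < gU j η) ↔ η ∈ T := by
    intro η
    rw [hTdef]
    simp only [Set.mem_setOf_eq]
    refine forall_congr' fun j => ?_
    by_cases hj : g j = 0
    · simp [hgUdef, hj]
    · simp [hgUdef, hj]
  have hcellU : IsPolyhedralCell U := by
    refine ⟨⟨η₀, hη₀U⟩, 0, m, Fin.elim0, gU, ?_⟩
    rw [← hTU]
    ext η
    simp only [Set.mem_setOf_eq]
    constructor
    · intro hη
      exact ⟨fun i => i.elim0, (hgUiff η).mpr hη⟩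
    · rintro ⟨-, h2⟩
      exact (hgUiff η).mp h2
  have hnW : Module.finrank ℝ (V →L[ℝ] ℝ) = n := finrank_clm_dual.trans hn
  by_cases hv : v ∈ -σ
  · -- v ∈ -σ : the set is all of U
    have hsub1 : U ∩ {ξ : V →L[ℝ] ℝ | ξ v ≤ 1} = U := by
      apply Set.inter_eq_self_of_subset_left
      intro ξ hξ
      have hξD : ξ ∈ D := by rw [hU] at hξ; exact interior_subset hξ
      have hnegv : -v ∈ σ := Set.mem_neg.mp hv
      have h3 := hξD (-v) hnegv
      rw [map_neg] at h3
      simp only [Set.mem_setOf_eq]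
      linarith
    rw [hsub1, if_pos hv]
    refine ⟨ind_mem_PolF hcellU, ?_⟩
    have hdimU : cellDim U = n := by
      unfold cellDim
      rw [cellDim_of_isOpen' hUopen ⟨η₀, hη₀U⟩]
      exact hnW
    rw [hId U hcellU, hdimU]
  · -- v ∉ -σ
    have h0σ : (0:V) ∈ σ := (hmemσ 0).mpr (fun i => by simp)
    have hn1 : n ≠ 0 := by
      intro h
      rw [h] at hn
      have hss : Subsingleton V := Module.finrank_zero_iff.mp hn
      exact hv (by rw [Set.mem_neg, Subsingleton.elim (-v) 0]; exact h0σ)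
    obtain ⟨m', hm'⟩ := Nat.exists_eq_succ_of_ne_zero hn1
    have hexi : ∃ i, 0 < α i v := by
      have hns : ¬ (-v ∈ σ) := fun h => hv (Set.mem_neg.mpr h)
      rw [hmemσ] at hns
      push_neg at hns
      obtain ⟨i, hi⟩ := hns
      exact ⟨i, by rw [map_neg] at hi; linarith⟩
    obtain ⟨i₀, hi₀⟩ := hexi
    set ξ₀ : V →L[ℝ] ℝ :=
      η₀ + ((|η₀ v| + 1)/(α i₀ v)) • LinearMap.toContinuousLinearMap (α i₀) with hξ₀def
    have ht0 : 0 ≤ (|η₀ v| + 1)/(α i₀ v) := div_nonneg (by positivity) hi₀.le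
    have hξ₀T : ξ₀ ∈ T := hTaddα _ ht0 i₀ η₀ hη₀T
    have hξ₀v : 0 < ξ₀ v := by
      rw [hξ₀def, ContinuousLinearMap.add_apply, ContinuousLinearMap.smul_apply, smul_eq_mul]
      have hαv : (LinearMap.toContinuousLinearMap (α i₀)) v = α i₀ v := by simp
      rw [hαv, div_mul_cancel₀ _ (ne_of_gt hi₀)]
      have h5 := abs_nonneg (η₀ v)
      have h6 := neg_abs_le (η₀ v)
      linarith
    set ξ₁ : V →L[ℝ] ℝ := (ξ₀ v)⁻¹ • ξ₀ with hξ₁def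
    have hξ₁T : ξ₁ ∈ T := hTsmul _ (inv_pos.mpr hξ₀v) _ hξ₀T
    have hξ₁v : ξ₁ v = 1 := by
      rw [hξ₁def, ContinuousLinearMap.smul_apply, smul_eq_mul,
        inv_mul_cancel₀ (ne_of_gt hξ₀v)]
    have hApt : ∃ η ∈ T, η v < 1 := by
      by_cases hev : η₀ v < 1
      · exact ⟨η₀, hη₀T, hev⟩
      · push_neg at hev
        have hpos : (0:ℝ) < (2 * η₀ v)⁻¹ := by
          apply inv_pos.mpr; linarith
        refine ⟨(2 * η₀ v)⁻¹ • η₀, hTsmul _ hpos _ hη₀T, ?_⟩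
        rw [ContinuousLinearMap.smul_apply, smul_eq_mul]
        have ha : η₀ v ≠ 0 := by linarith
        rw [mul_inv, mul_assoc, inv_mul_cancel₀ ha, mul_one]
        norm_num
    obtain ⟨ηA, hηAT, hηAv⟩ := hApt
    set A : Set (V →L[ℝ] ℝ) := T ∩ {η | η v < 1} with hAdef
    set B : Set (V →L[ℝ] ℝ) := T ∩ {η | η v = 1} with hBdef
    have hSAB : U ∩ {ξ : V →L[ℝ] ℝ | ξ v ≤ 1} = A ∪ B := by
      rw [← hTU, hAdef, hBdef]
      ext ξ
      simp only [Set.mem_inter_iff, Set.mem_union, Set.mem_setOf_eq]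
      constructor
      · rintro ⟨h1, h2⟩
        rcases h2.lt_or_eq with h | h
        exacts [Or.inl ⟨h1, h⟩, Or.inr ⟨h1, h⟩]
      · rintro (⟨h1, h2⟩ | ⟨h1, h2⟩)
        exacts [⟨h1, h2.le⟩, ⟨h1, h2.le⟩]
    have hAopen : IsOpen A := hTopen.inter (isOpen_lt (hevcont v) continuous_const)
    set aff1 : (V →L[ℝ] ℝ) →ᵃ[ℝ] ℝ :=
      { toFun := fun η => 1 - η v
        linear := -(evalL v)
        map_vadd' := by
          intro q w
          simp only [vadd_eq_add, LinearMap.neg_apply, evalL_apply,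
            ContinuousLinearMap.add_apply]
          ring } with haff1
    set aff2 : (V →L[ℝ] ℝ) →ᵃ[ℝ] ℝ :=
      { toFun := fun η => η v - 1
        linear := evalL v
        map_vadd' := by
          intro q w
          simp only [vadd_eq_add, evalL_apply, ContinuousLinearMap.add_apply]
          ring } with haff2
    have haff1app : ∀ η : V →L[ℝ] ℝ, aff1 η = 1 - η v := fun η => rfl
    have haff2app : ∀ η : V →L[ℝ] ℝ, aff2 η = η v - 1 := fun η => rfl
    have hcellA : IsPolyhedralCell A := by
      refine ⟨⟨ηA, hηAT, hηAv⟩, 0, m + 1, Fin.elim0, Fin.cons aff1 gU, ?_⟩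
      rw [hAdef]
      ext η
      simp only [Set.mem_setOf_eq, Set.mem_inter_iff]
      constructor
      · rintro ⟨hT', hlt⟩
        refine ⟨fun i => i.elim0, ?_⟩
        rw [Fin.forall_fin_succ]
        constructor
        · rw [Fin.cons_zero, haff1app]
          linarith
        · intro j
          rw [Fin.cons_succ]
          exact (hgUiff η).mpr hT' j
      · rintro ⟨-, hall⟩
        rw [Fin.forall_fin_succ] at hall
        obtain ⟨h0, hs⟩ := hall
        rw [Fin.cons_zero, haff1app] at h0
        refine ⟨(hgUiff η).mp (fun j => ?_), by linarith⟩
        have := hs j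
        rwa [Fin.cons_succ] at this
    have hcellB : IsPolyhedralCell B := by
      refine ⟨⟨ξ₁, hξ₁T, hξ₁v⟩, 1, m, (fun _ => aff2), gU, ?_⟩
      rw [hBdef]
      ext η
      simp only [Set.mem_inter_iff, Set.mem_setOf_eq]
      constructor
      · rintro ⟨hT', hequ⟩
        refine ⟨fun _ => ?_, (hgUiff η).mpr hT'⟩
        rw [haff2app, hequ, sub_self]
      · rintro ⟨he, hs⟩
        have h1 : aff2 η = 0 := he 0
        rw [haff2app] at h1
        exact ⟨(hgUiff η).mp hs, by linarith⟩
    have hdimA : cellDim A = n := by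
      unfold cellDim
      rw [cellDim_of_isOpen' hAopen ⟨ηA, hηAT, hηAv⟩]
      exact hnW
    have hBeq : B = T ∩ {y | evalL v y = 1} := by
      rw [hBdef]; ext η; simp
    have hdimB : cellDim B + 1 = n := by
      unfold cellDim
      rw [hBeq, cellDim_slice hTopen (evalL v) hξ₁T (show (evalL v) ξ₁ = 1 from hξ₁v)]
      exact hnW
    have hind : ind (U ∩ {ξ : V →L[ℝ] ℝ | ξ v ≤ 1}) = ind A + ind B := by
      rw [hSAB]
      funext ξ
      simp only [ind, Pi.add_apply]
      by_cases hA : ξ ∈ A <;> by_cases hB : ξ ∈ B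
      · exact absurd hB.2 (ne_of_lt hA.2)
      · simp [Set.mem_union, hA, hB]
      · simp [Set.mem_union, hA, hB]
      · simp [Set.mem_union, hA, hB]
    have hmem : ind (U ∩ {ξ : V →L[ℝ] ℝ | ξ v ≤ 1}) ∈ PolF (V →L[ℝ] ℝ) := by
      rw [hind]
      exact AddSubgroup.add_mem _ (ind_mem_PolF hcellA) (ind_mem_PolF hcellB)
    refine ⟨hmem, ?_⟩
    have hsum : (⟨ind (U ∩ {ξ : V →L[ℝ] ℝ | ξ v ≤ 1}), hmem⟩ : PolF (V →L[ℝ] ℝ)) =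
        ⟨ind A, ind_mem_PolF hcellA⟩ + ⟨ind B, ind_mem_PolF hcellB⟩ := by
      apply Subtype.ext
      show ind (U ∩ {ξ : V →L[ℝ] ℝ | ξ v ≤ 1}) = ind A + ind B
      exact hind
    rw [hsum, map_add, hId A hcellA, hId B hcellB, hdimA, if_neg hv]
    have hdB : cellDim B = m' := by omega
    rw [hdB, hm', pow_succ]
    ring
end

section
/- Let V be a finite-dimensional real vector space, let f : V → ℤ be a polyhedral function, and let x ∈ V. Then there exists a unique conical polyhedral function g : V → ℤ such that g(v) = f(x + v) for all v in some neighborhood of 0 in V. (The assignment f ↦ g is the specialization operator ν_x : PolF(V) → PolF_{ℝ>0}(V); in particular the germ of a polyhedral function at any point is conical.) -/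
/-- A function is conical if it is invariant under scaling by positive reals. -/
def Conical {W : Type*} [SMul ℝ W] (f : W → ℤ) : Prop :=
  ∀ c : ℝ, 0 < c → ∀ x, f (c • x) = f x

lemma conical_eq_of_eventuallyEq {V : Type*} [NormedAddCommGroup V] [NormedSpace ℝ V]
    {g₁ g₂ : V → ℤ} (h₁ : Conical g₁) (h₂ : Conical g₂)
    (h : ∀ᶠ v in nhds (0 : V), g₁ v = g₂ v) : g₁ = g₂ := by
  funext v
  have hc : Continuous fun c : ℝ => c • v := continuous_id.smul continuous_const
  have ht : Filter.Tendsto (fun c : ℝ => c • v) (nhdsWithin 0 (Set.Ioi 0)) (nhds 0) := by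
    have h0 : Filter.Tendsto (fun c : ℝ => c • v) (nhds 0) (nhds 0) := by
      simpa using hc.tendsto 0
    exact h0.mono_left nhdsWithin_le_nhds
  obtain ⟨c, hcv, hc0⟩ :=
    ((ht.eventually h).and (self_mem_nhdsWithin : Set.Ioi (0:ℝ) ∈ _)).exists
  calc g₁ v = g₁ (c • v) := (h₁ c hc0 v).symm
    _ = g₂ (c • v) := hcv
    _ = g₂ v := h₂ c hc0 v

lemma exists_conical_germ_ind {V : Type*} [NormedAddCommGroup V] [NormedSpace ℝ V]
    [FiniteDimensional ℝ V] {C : Set V} (hC : IsPolyhedralCell C) (x : V) :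
    ∃ g, g ∈ PolF V ∧ Conical g ∧ ∀ᶠ v in nhds (0 : V), g v = ind C (x + v) := by
  obtain ⟨hne, p, q, F, G, rfl⟩ := hC
  have key : ∀ (H : V →ᵃ[ℝ] ℝ) (v : V), H (x + v) = H.linear v + H x := by
    intro H v
    rw [add_comm x v, ← vadd_eq_add, AffineMap.map_vadd, vadd_eq_add]
  have hTend : ∀ H : V →ᵃ[ℝ] ℝ,
      Filter.Tendsto (fun v : V => H (x + v)) (nhds 0) (nhds (H x)) := by
    intro H
    have hcont : Continuous fun v : V => H.linear v + H x :=
      H.linear.continuous_of_finiteDimensional.add continuous_const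
    have := hcont.tendsto 0
    simp only [map_zero, zero_add] at this
    exact this.congr fun v => (key H v).symm
  by_cases hcase : (∀ i, F i x = 0) ∧ ∀ j, 0 ≤ G j x
  · -- the tangent cone
    set G' : Fin q → (V →ᵃ[ℝ] ℝ) :=
      fun j => if 0 < G j x then AffineMap.const ℝ V (1:ℝ) else (G j).linear.toAffineMap with hG'
    set D : Set V := {v | (∀ i, (F i).linear.toAffineMap v = 0) ∧ ∀ j, 0 < G' j v} with hD
    obtain ⟨y, hy⟩ := hne
    have hyD : y - x ∈ D := by
      refine ⟨fun i => ?_, fun j => ?_⟩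
      · have := (F i).linearMap_vsub y x
        simp only [vsub_eq_sub] at this
        simp [this, hy.1 i, hcase.1 i]
      · by_cases hj : 0 < G j x
        · simp [hG', hj]
        · have hj0 : G j x = 0 := le_antisymm (not_lt.mp hj) (hcase.2 j)
          have := (G j).linearMap_vsub y x
          simp only [vsub_eq_sub] at this
          simp [hG', hj, this, hj0, hy.2 j]
    have hDcell : IsPolyhedralCell D :=
      ⟨⟨y - x, hyD⟩, p, q, fun i => (F i).linear.toAffineMap, G', rfl⟩
    refine ⟨ind D, AddSubgroup.subset_closure ⟨D, hDcell, rfl⟩, ?_, ?_⟩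
    · intro c hc v
      have hiff : c • v ∈ D ↔ v ∈ D := by
        constructor <;> intro hv <;> refine ⟨fun i => ?_, fun j => ?_⟩
        · have := hv.1 i
          simp only [LinearMap.coe_toAffineMap, map_smul, smul_eq_mul] at this ⊢
          exact (mul_eq_zero.mp this).resolve_left (ne_of_gt hc)
        · have := hv.2 j
          by_cases hj : 0 < G j x
          · simpa [hG', hj] using this
          · simp only [hG', if_neg hj, LinearMap.coe_toAffineMap, map_smul,
              smul_eq_mul] at this ⊢
            nlinarith [this, hc]
        · have := hv.1 i
          simp only [LinearMap.coe_toAffineMap, map_smul, smul_eq_mul] at this ⊢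
          simp [this]
        · have := hv.2 j
          by_cases hj : 0 < G j x
          · simpa [hG', hj] using this
          · simp only [hG', if_neg hj, LinearMap.coe_toAffineMap, map_smul,
              smul_eq_mul] at this ⊢
            exact mul_pos hc this
      simp only [ind]
      by_cases hm : v ∈ D
      · rw [if_pos hm, if_pos (hiff.mpr hm)]
      · rw [if_neg hm, if_neg fun h => hm (hiff.mp h)]
    · have hEv : ∀ᶠ v in nhds (0:V), ∀ j, 0 < G j x → 0 < G j (x + v) := by
        rw [Filter.eventually_all]
        intro j
        by_cases hj : 0 < G j x
        · exact ((hTend (G j)).eventually_const_lt hj).mono fun v hv _ => hv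
        · exact Filter.Eventually.of_forall fun v h => absurd h hj
      refine hEv.mono fun v hv => ?_
      have hiff : v ∈ D ↔ x + v ∈ {x | (∀ i, F i x = 0) ∧ ∀ j, 0 < G j x} := by
        constructor <;> intro hm <;> refine ⟨fun i => ?_, fun j => ?_⟩
        · have := hm.1 i
          simp only [LinearMap.coe_toAffineMap] at this
          rw [key, this, hcase.1 i, add_zero]
        · by_cases hj : 0 < G j x
          · exact hv j hj
          · have hj0 : G j x = 0 := le_antisymm (not_lt.mp hj) (hcase.2 j)
            have := hm.2 j
            simp only [hG', if_neg hj, LinearMap.coe_toAffineMap] at this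
            rw [key, hj0, add_zero]; exact this
        · have := hm.1 i
          rw [key, hcase.1 i, add_zero] at this
          simpa using this
        · by_cases hj : 0 < G j x
          · simp [hG', hj]
          · have hj0 : G j x = 0 := le_antisymm (not_lt.mp hj) (hcase.2 j)
            have := hm.2 j
            rw [key, hj0, add_zero] at this
            simpa [hG', hj] using this
      simp only [ind]
      by_cases hm : v ∈ D
      · rw [if_pos hm, if_pos (hiff.mp hm)]
      · rw [if_neg hm, if_neg fun h => hm (hiff.mpr h)]
  · -- near x the indicator vanishes
    refine ⟨0, zero_mem _, fun c hc v => rfl, ?_⟩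
    have hnot : ∀ᶠ v in nhds (0:V), x + v ∉ {x | (∀ i, F i x = 0) ∧ ∀ j, 0 < G j x} := by
      rcases not_and_or.mp hcase with h | h
      · push_neg at h
        obtain ⟨i, hi⟩ := h
        exact ((hTend (F i)).eventually_ne hi).mono fun v hv hm => hv (hm.1 i)
      · push_neg at h
        obtain ⟨j, hj⟩ := h
        exact ((hTend (G j)).eventually (eventually_lt_nhds hj)).mono
          fun v hv hm => absurd (hm.2 j) (not_lt.mpr hv.le)
    exact hnot.mono fun v hv => by simp [ind, hv]

/-- Specialization: the germ of a polyhedral function at any point is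
(uniquely) represented by a conical polyhedral function.  For `f ∈ PolF V` and `x ∈ V`
there is a unique conical polyhedral `g` with `g v = f (x + v)` for all `v` near `0`. -/
theorem statement7 (V : Type*) [NormedAddCommGroup V] [NormedSpace ℝ V]
    [FiniteDimensional ℝ V]
    (f : V → ℤ) (hf : f ∈ PolF V) (x : V) :
    ∃! g : V → ℤ, (g ∈ PolF V ∧ Conical g) ∧ ∀ᶠ v in nhds (0 : V), g v = f (x + v) := by
  have hex : ∃ g, g ∈ PolF V ∧ Conical g ∧ ∀ᶠ v in nhds (0:V), g v = f (x + v) := by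
    induction hf using AddSubgroup.closure_induction with
    | mem f hfm =>
      obtain ⟨C, hC, rfl⟩ := hfm
      exact exists_conical_germ_ind hC x
    | zero => exact ⟨0, zero_mem _, fun c hc v => rfl, Filter.Eventually.of_forall fun v => rfl⟩
    | add f₁ f₂ h₁ h₂ ih₁ ih₂ =>
      obtain ⟨g₁, hg₁, hc₁, he₁⟩ := ih₁
      obtain ⟨g₂, hg₂, hc₂, he₂⟩ := ih₂
      exact ⟨g₁ + g₂, add_mem hg₁ hg₂,
        fun c hc v => by simp [Pi.add_apply, hc₁ c hc v, hc₂ c hc v],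
        (he₁.and he₂).mono fun v ⟨a, b⟩ => by simp [Pi.add_apply, a, b]⟩
    | neg f₁ h₁ ih =>
      obtain ⟨g₁, hg₁, hc₁, he₁⟩ := ih
      exact ⟨-g₁, neg_mem hg₁, fun c hc v => by simp [hc₁ c hc v],
        he₁.mono fun v a => by simp [a]⟩
  obtain ⟨g, hg1, hg2, hg3⟩ := hex
  refine ⟨g, ⟨⟨hg1, hg2⟩, hg3⟩, ?_⟩
  rintro g' ⟨⟨hg1', hg2'⟩, hg3'⟩
  exact conical_eq_of_eventuallyEq hg2' hg2
    ((hg3'.and hg3).mono fun v ⟨a, b⟩ => a.trans b.symm)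
end
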